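/- arXiv:0806.3060 — 5 statements merged into one kernel-verified Lean document; each statement's English description precedes it below -/
import Mathlib

section
/- Let a : ℕ → ℝ (indexed from 1) be a sequence such that there exists K with |n · a_n| ≤ K for all n ≥ 1. If for some k ≥ 1 the k-th order Cesàro means S^{(k)}_n / n^k converge as n → ∞, then the series ∑ a_n converges (i.e. the partial sums S^{(0)}_n converge). -/
open Filter Topology

/-- Iterated Cesàro sums of a sequence `b` (indexed from 1):
`cesSum b 0 n = b n` and `cesSum b (k+1) n = ∑_{i=1}^n cesSum b k i`. -/
noncomputable def cesSum (b : ℕ → ℝ) : ℕ → ℕ → ℝ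
  | 0, n => b n
  | k+1, n => ∑ i ∈ Finset.Icc 1 n, cesSum b k i

/-- Forward difference with step `h`. -/
noncomputable def Dd (h : ℕ) (f : ℕ → ℝ) : ℕ → ℝ := fun n => f (n + h) - f n

lemma cesSum_succ (b : ℕ → ℝ) (k n : ℕ) :
    cesSum b (k+1) n = ∑ i ∈ Finset.Icc 1 n, cesSum b k i := rfl

lemma Icc_one (n : ℕ) : Finset.Icc 1 n = Finset.Ioc 0 n := by
  rw [← Finset.Icc_add_one_left_eq_Ioc, zero_add]

lemma Dd_cesSum (b : ℕ → ℝ) (k h n : ℕ) :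
    Dd h (cesSum b (k+1)) n = ∑ m ∈ Finset.Ioc n (n+h), cesSum b k m := by
  simp only [Dd, cesSum_succ, Icc_one]
  rw [← Finset.sum_Ioc_consecutive _ (Nat.zero_le n) (Nat.le_add_right n h)]
  ring

lemma Dd_window (h : ℕ) (g : ℕ → ℝ) :
    Dd h (fun n => ∑ m ∈ Finset.Ioc n (n+h), g m)
      = fun n => ∑ m ∈ Finset.Ioc n (n+h), Dd h g m := by
  funext n
  simp only [Dd]
  rw [Finset.sum_sub_distrib]
  congr 1
  rw [← Finset.map_add_right_Ioc n (n+h) h, Finset.sum_map]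
  rfl

lemma Dd_iter_window (h j : ℕ) (g : ℕ → ℝ) :
    (Dd h)^[j] (fun n => ∑ m ∈ Finset.Ioc n (n+h), g m)
      = fun n => ∑ m ∈ Finset.Ioc n (n+h), (Dd h)^[j] g m := by
  induction j generalizing g with
  | zero => simp
  | succ j ih =>
    rw [Function.iterate_succ_apply, Dd_window, ih, ← Function.iterate_succ_apply]

lemma Dd_iter_cesSum_bounds (h : ℕ) (b : ℕ → ℝ) (c C : ℝ) :
    ∀ j n, (∀ m ∈ Finset.Icc n (n + j*h), c ≤ b m ∧ b m ≤ C) →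
      c * (h:ℝ)^j ≤ (Dd h)^[j] (cesSum b j) n ∧ (Dd h)^[j] (cesSum b j) n ≤ C * (h:ℝ)^j := by
  intro j
  induction j with
  | zero =>
    intro n hb
    have := hb n (by simp)
    simpa [cesSum] using this
  | succ j ih =>
    intro n hb
    rw [Function.iterate_succ_apply]
    have hw : Dd h (cesSum b (j+1)) = fun n => ∑ m ∈ Finset.Ioc n (n+h), cesSum b j m :=
      funext fun n => Dd_cesSum b j h n
    rw [hw, Dd_iter_window]
    have hsub : ∀ m ∈ Finset.Ioc n (n+h), ∀ p ∈ Finset.Icc m (m + j*h),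
        p ∈ Finset.Icc n (n + (j+1)*h) := by
      intro m hm p hp
      simp only [Finset.mem_Ioc] at hm
      simp only [Finset.mem_Icc] at hp ⊢
      constructor
      · exact le_trans (le_of_lt hm.1) hp.1
      · calc p ≤ m + j*h := hp.2
          _ ≤ n + h + j*h := by omega
          _ = n + (j+1)*h := by ring
    have hcard : (Finset.Ioc n (n+h)).card = h := by
      rw [Nat.card_Ioc]; omega
    constructor
    · calc c * (h:ℝ)^(j+1) = ∑ _m ∈ Finset.Ioc n (n+h), c * (h:ℝ)^j := by
            rw [Finset.sum_const, hcard, nsmul_eq_mul]; ring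
        _ ≤ _ := Finset.sum_le_sum fun m hm =>
            (ih m (fun p hp => hb p (hsub m hm p hp))).1
    · calc (∑ m ∈ Finset.Ioc n (n+h), (Dd h)^[j] (cesSum b j) m)
          ≤ ∑ _m ∈ Finset.Ioc n (n+h), C * (h:ℝ)^j :=
            Finset.sum_le_sum fun m hm => (ih m (fun p hp => hb p (hsub m hm p hp))).2
        _ = C * (h:ℝ)^(j+1) := by rw [Finset.sum_const, hcard, nsmul_eq_mul]; ring

lemma Dd_iter_abs_le (h : ℕ) :
    ∀ (j : ℕ) (f : ℕ → ℝ) (n : ℕ) (B : ℝ),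
      (∀ m ∈ Finset.Icc n (n + j*h), |f m| ≤ B) → |(Dd h)^[j] f n| ≤ 2^j * B := by
  intro j
  induction j with
  | zero => intro f n B hf; simpa using hf n (by simp)
  | succ j ih =>
    intro f n B hf
    rw [Function.iterate_succ_apply']
    have h1 : |(Dd h)^[j] f (n+h)| ≤ 2^j * B := by
      apply ih
      intro m hm
      apply hf
      simp only [Finset.mem_Icc] at hm ⊢
      constructor
      · omega
      · calc m ≤ n + h + j*h := hm.2
          _ = n + (j+1)*h := by ring
    have h2 : |(Dd h)^[j] f n| ≤ 2^j * B := by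
      apply ih
      intro m hm
      apply hf
      simp only [Finset.mem_Icc] at hm ⊢
      exact ⟨hm.1, le_trans hm.2 (by
        have : j*h ≤ (j+1)*h := Nat.mul_le_mul_right h (Nat.le_succ j)
        omega)⟩
    calc |(Dd h)^[j] f (n+h) - (Dd h)^[j] f n| ≤ |(Dd h)^[j] f (n+h)| + |(Dd h)^[j] f n| :=
          abs_sub _ _
      _ ≤ 2^j * B + 2^j * B := add_le_add h1 h2
      _ = 2^(j+1) * B := by ring

lemma Dd_iter_sub_mul (h j : ℕ) (f g : ℕ → ℝ) (c : ℝ) :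
    (Dd h)^[j] (fun n => f n - c * g n)
      = fun n => (Dd h)^[j] f n - c * (Dd h)^[j] g n := by
  induction j generalizing f g with
  | zero => rfl
  | succ j ih =>
    rw [Function.iterate_succ_apply, Function.iterate_succ_apply,
      Function.iterate_succ_apply (Dd h) j g]
    have : Dd h (fun n => f n - c * g n) = fun n => Dd h f n - c * Dd h g n := by
      funext n; simp only [Dd]; ring
    rw [this, ih]

lemma cesSum_one_eq (j : ℕ) (m : ℕ) :
    cesSum (fun _ => (1:ℝ)) (j+1) m = ((m + j).choose (j+1) : ℕ) := by
  induction j generalizing m with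
  | zero => simp [cesSum_succ, cesSum, Nat.choose_one_right]
  | succ j ih =>
    rw [cesSum_succ]
    have : ∀ i ∈ Finset.Icc 1 m, cesSum (fun _ => (1:ℝ)) (j+1) i = ((i + j).choose (j+1) : ℕ) :=
      fun i _ => ih i
    rw [Finset.sum_congr rfl this]
    rw [← Nat.cast_sum]
    congr 1
    have hmap : ∑ i ∈ Finset.Icc 1 m, (i + j).choose (j+1)
        = ∑ t ∈ Finset.Icc (1+j) (m+j), t.choose (j+1) := by
      rw [← Finset.map_add_right_Icc 1 m j, Finset.sum_map]
      rfl
    rw [hmap]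
    have : Finset.Icc (1+j) (m+j) = Finset.Icc (j+1) (m+j) := by rw [Nat.add_comm]
    rw [this, Nat.sum_Icc_choose]
    rfl

lemma tendsto_cesSum_one (j : ℕ) :
    Tendsto (fun m : ℕ => cesSum (fun _ => (1:ℝ)) (j+1) m / (m:ℝ)^(j+1)) atTop
      (𝓝 (1 / (Nat.factorial (j+1) : ℝ))) := by
  have hfacpos : (0:ℝ) < (Nat.factorial (j+1) : ℝ) := by
    exact_mod_cast Nat.factorial_pos (j+1)
  -- each factor tends to 1
  have hone : ∀ c : ℝ, Tendsto (fun m : ℕ => ((m:ℝ) + c) / m) atTop (𝓝 1) := by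
    intro c
    have h0 := tendsto_const_div_atTop_nhds_zero_nat c
    have h1 : Tendsto (fun m : ℕ => 1 + c / (m:ℝ)) atTop (𝓝 (1 + 0)) :=
      tendsto_const_nhds.add h0
    rw [add_zero] at h1
    refine h1.congr' ?_
    filter_upwards [eventually_ge_atTop 1] with m hm
    have hm0 : (m:ℝ) ≠ 0 := by
      have : (1:ℝ) ≤ (m:ℝ) := by exact_mod_cast hm
      linarith
    field_simp
  have hprod : Tendsto
      (fun m : ℕ => ∏ i ∈ Finset.range (j+1), (((m:ℝ) + ((j - i : ℕ):ℝ)) / m)) atTop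
      (𝓝 (∏ _i ∈ Finset.range (j+1), (1:ℝ))) :=
    tendsto_finset_prod _ (fun i _ => hone _)
  rw [Finset.prod_const_one] at hprod
  have hmain : Tendsto
      (fun m : ℕ => (1 / (Nat.factorial (j+1) : ℝ)) *
        ∏ i ∈ Finset.range (j+1), (((m:ℝ) + ((j - i : ℕ):ℝ)) / m)) atTop
      (𝓝 ((1 / (Nat.factorial (j+1) : ℝ)) * 1)) := tendsto_const_nhds.mul hprod
  rw [mul_one] at hmain
  refine hmain.congr' ?_
  filter_upwards [eventually_ge_atTop 1] with m hm
  have hm0 : (0:ℝ) < (m:ℝ) := by exact_mod_cast hm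
  -- identity
  have hnat : (m + j).descFactorial (j+1) = ∏ i ∈ Finset.range (j+1), (m + (j - i)) := by
    rw [Nat.descFactorial_eq_prod_range]
    exact Finset.prod_congr rfl fun i hi => by
      have : i < j + 1 := Finset.mem_range.mp hi
      omega
  have hfac : ((m + j).choose (j+1) : ℝ) * (Nat.factorial (j+1) : ℝ)
      = ∏ i ∈ Finset.range (j+1), ((m:ℝ) + ((j - i : ℕ):ℝ)) := by
    have h2 : (m + j).descFactorial (j+1) = (Nat.factorial (j+1)) * (m + j).choose (j+1) :=
      Nat.descFactorial_eq_factorial_mul_choose _ _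
    have := h2.symm.trans hnat
    have hcast : ((Nat.factorial (j+1)) * (m + j).choose (j+1) : ℕ)
        = ((∏ i ∈ Finset.range (j+1), (m + (j - i)) : ℕ)) := this
    calc ((m + j).choose (j+1) : ℝ) * (Nat.factorial (j+1) : ℝ)
        = (((Nat.factorial (j+1)) * (m + j).choose (j+1) : ℕ) : ℝ) := by push_cast; ring
      _ = ((∏ i ∈ Finset.range (j+1), (m + (j - i)) : ℕ) : ℝ) := by rw [hcast]
      _ = ∏ i ∈ Finset.range (j+1), ((m:ℝ) + ((j - i : ℕ):ℝ)) := by push_cast; ring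
  rw [cesSum_one_eq]
  rw [Finset.prod_div_distrib, Finset.prod_const, Finset.card_range]
  rw [← hfac]
  field_simp

lemma partial_sum_diff (a : ℕ → ℝ) (K : ℝ) (hK : ∀ n : ℕ, 1 ≤ n → |(n : ℝ) * a n| ≤ K)
    (hK0 : 0 ≤ K) (n m : ℕ) (hn : 1 ≤ n) (hnm : n ≤ m) :
    |(∑ i ∈ Finset.Icc 1 m, a i) - ∑ i ∈ Finset.Icc 1 n, a i|
      ≤ K * ((m - n : ℕ) : ℝ) / n := by
  have hnpos : (0:ℝ) < (n:ℝ) := by exact_mod_cast hn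
  have hrepr : (∑ i ∈ Finset.Icc 1 m, a i) - (∑ i ∈ Finset.Icc 1 n, a i)
      = ∑ i ∈ Finset.Ioc n m, a i := by
    simp only [Icc_one]
    rw [← Finset.sum_Ioc_consecutive _ (Nat.zero_le n) hnm]
    ring
  rw [hrepr]
  calc |∑ i ∈ Finset.Ioc n m, a i| ≤ ∑ i ∈ Finset.Ioc n m, |a i| :=
        Finset.abs_sum_le_sum_abs _ _
    _ ≤ ∑ _i ∈ Finset.Ioc n m, K / n := by
        refine Finset.sum_le_sum fun i hi => ?_
        have hi' := Finset.mem_Ioc.mp hi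
        have hipos : (0:ℝ) < (i:ℝ) := by
          have : 1 ≤ i := by omega
          exact_mod_cast this
        have h1 : (i:ℝ) * |a i| ≤ K := by
          have := hK i (by omega)
          rwa [abs_mul, abs_of_nonneg (by positivity : (0:ℝ) ≤ (i:ℝ))] at this
        have h2 : |a i| ≤ K / i := by
          rw [le_div_iff₀ hipos]; linarith [h1]
        have h3 : K / (i:ℝ) ≤ K / n := by
          apply div_le_div_of_nonneg_left hK0 hnpos
          exact_mod_cast hi'.1.le
        linarith
    _ = K * ((m - n : ℕ) : ℝ) / n := by
        rw [Finset.sum_const, Nat.card_Ioc, nsmul_eq_mul]; ring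

lemma key_estimate (a : ℕ → ℝ) (K : ℝ) (hK : ∀ n : ℕ, 1 ≤ n → |(n : ℝ) * a n| ≤ K)
    (hK0 : 0 ≤ K) (j : ℕ) (s : ℝ) (n h : ℕ) (hn : 1 ≤ n) :
    |(∑ i ∈ Finset.Icc 1 n, a i) - s| * (h:ℝ)^(j+1)
      ≤ (K * ((j:ℝ)+1) * h / n) * (h:ℝ)^(j+1)
        + |(Dd h)^[j+1] (fun m => cesSum (fun p => ∑ i ∈ Finset.Icc 1 p, a i) (j+1) m
            - s * cesSum (fun _ => (1:ℝ)) (j+1) m) n| := by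
  set S : ℕ → ℝ := fun p => ∑ i ∈ Finset.Icc 1 p, a i with hSdef
  have hnpos : (0:ℝ) < (n:ℝ) := by exact_mod_cast hn
  set B : ℝ := K * ((j:ℝ)+1) * h / n with hBdef
  have hb : ∀ m ∈ Finset.Icc n (n + (j+1)*h), S n - B ≤ S m ∧ S m ≤ S n + B := by
    intro m hm
    have hm' := Finset.mem_Icc.mp hm
    have hdiff := partial_sum_diff a K hK hK0 n m hn hm'.1
    have hle : K * ((m - n : ℕ) : ℝ) / n ≤ B := by
      rw [hBdef]
      have h1 : ((m - n : ℕ) : ℝ) ≤ ((j:ℝ)+1) * h := by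
        have : (m - n : ℕ) ≤ (j+1) * h := by omega
        calc ((m - n : ℕ) : ℝ) ≤ (((j+1) * h : ℕ) : ℝ) := by exact_mod_cast this
          _ = ((j:ℝ)+1) * h := by push_cast; ring
      have h2 : K * ((m - n : ℕ) : ℝ) ≤ K * (((j:ℝ)+1) * h) := by
        exact mul_le_mul_of_nonneg_left h1 hK0
      calc K * ((m - n : ℕ) : ℝ) / n ≤ K * (((j:ℝ)+1) * h) / n :=
            (div_le_div_iff_of_pos_right hnpos).mpr h2
        _ = K * ((j:ℝ)+1) * h / n := by ring
    have habs : |S m - S n| ≤ B := le_trans hdiff hle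
    have := abs_le.mp habs
    constructor <;> linarith [this.1, this.2]
  have hA := Dd_iter_cesSum_bounds h S (S n - B) (S n + B) (j+1) n hb
  have hH := Dd_iter_cesSum_bounds h (fun _ => (1:ℝ)) 1 1 (j+1) n
    (fun m _ => ⟨le_rfl, le_rfl⟩)
  have hHeq : (Dd h)^[j+1] (cesSum (fun _ => (1:ℝ)) (j+1)) n = (h:ℝ)^(j+1) := by
    have h1 := hH.1
    have h2 := hH.2
    rw [one_mul] at h1 h2
    linarith
  have hlin := congrFun (Dd_iter_sub_mul h (j+1) (cesSum S (j+1))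
    (cesSum (fun _ => (1:ℝ)) (j+1)) s) n
  set D : ℝ := (Dd h)^[j+1] (cesSum S (j+1)) n with hDdef
  have hDF : (Dd h)^[j+1] (fun m => cesSum S (j+1) m
      - s * cesSum (fun _ => (1:ℝ)) (j+1) m) n = D - s * (h:ℝ)^(j+1) := by
    rw [hlin, hHeq]
  rw [hDF]
  have hpow : (0:ℝ) ≤ (h:ℝ)^(j+1) := by positivity
  have e1 : |S n - s| * (h:ℝ)^(j+1) = |S n * (h:ℝ)^(j+1) - s * (h:ℝ)^(j+1)| := by
    have e : S n * (h:ℝ)^(j+1) - s * (h:ℝ)^(j+1) = (S n - s) * (h:ℝ)^(j+1) := by ring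
    rw [e, abs_mul, abs_of_nonneg hpow]
  have e2 : |S n * (h:ℝ)^(j+1) - D| ≤ B * (h:ℝ)^(j+1) := by
    have h1 := hA.1
    have h2 := hA.2
    rw [abs_le]
    constructor <;> nlinarith [h1, h2]
  calc |S n - s| * (h:ℝ)^(j+1)
      = |S n * (h:ℝ)^(j+1) - s * (h:ℝ)^(j+1)| := e1
    _ ≤ |S n * (h:ℝ)^(j+1) - D| + |D - s * (h:ℝ)^(j+1)| := by
        have := abs_sub_le (S n * (h:ℝ)^(j+1)) D (s * (h:ℝ)^(j+1))
        exact this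
    _ ≤ B * (h:ℝ)^(j+1) + |D - s * (h:ℝ)^(j+1)| := by linarith [e2]

/-- **Hardy's theorem** (Theorem 1).  If `|n * a n| ≤ K` for all `n ≥ 1` and for some
`k ≥ 1` the `k`-th order Cesàro means `S^{(k)}_n / n^k` of the partial sums
`S_n = ∑_{i=1}^n a i` converge, then the series `∑ a n` converges, i.e. the partial
sums themselves converge. -/
theorem hardy_cesaro_implies_convergent (a : ℕ → ℝ) (K : ℝ)
    (hK : ∀ n : ℕ, 1 ≤ n → |(n : ℝ) * a n| ≤ K)
    (k : ℕ) (hk : 1 ≤ k) (L : ℝ)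
    (hconv : Tendsto
      (fun n : ℕ => cesSum (fun m => ∑ i ∈ Finset.Icc 1 m, a i) k n / (n : ℝ) ^ k)
      atTop (𝓝 L)) :
    ∃ M : ℝ, Tendsto (fun n : ℕ => ∑ i ∈ Finset.Icc 1 n, a i) atTop (𝓝 M) := by
  obtain ⟨j, rfl⟩ : ∃ j, k = j + 1 := ⟨k - 1, by omega⟩
  have hK0 : 0 ≤ K := le_trans (abs_nonneg _) (hK 1 le_rfl)
  have hfacpos : (0:ℝ) < (Nat.factorial (j+1) : ℝ) := by
    exact_mod_cast Nat.factorial_pos (j+1)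
  set s : ℝ := L * (Nat.factorial (j+1) : ℝ) with hsdef
  have hFlim : Tendsto (fun m : ℕ =>
      (cesSum (fun p => ∑ i ∈ Finset.Icc 1 p, a i) (j+1) m
        - s * cesSum (fun _ => (1:ℝ)) (j+1) m) / (m:ℝ)^(j+1)) atTop (𝓝 0) := by
    have h2 := tendsto_cesSum_one j
    have h3 := hconv.sub (h2.const_mul s)
    have h4 : L - s * (1 / (Nat.factorial (j+1) : ℝ)) = 0 := by
      rw [hsdef]; field_simp; ring
    rw [h4] at h3
    refine h3.congr fun m => ?_
    rw [sub_div, mul_div_assoc]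
  refine ⟨s, ?_⟩
  rw [Metric.tendsto_atTop]
  intro ε hε
  set δ : ℝ := ε / (4 * (K * ((j:ℝ)+1) + 1)) with hδdef
  have hδ : 0 < δ := by
    rw [hδdef]
    have : 0 < 4 * (K * ((j:ℝ)+1) + 1) := by positivity
    positivity
  set Cδ : ℝ := 2^(j+1) * (1/δ + ((j:ℝ)+1))^(j+1) with hCdef
  have hCpos : 0 < Cδ := by positivity
  set ε₀ : ℝ := ε / (4 * Cδ) with hε₀def
  have hε₀ : 0 < ε₀ := by positivity
  obtain ⟨N₂, hN₂⟩ := (Metric.tendsto_atTop.mp hFlim) ε₀ hε₀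
  obtain ⟨N₃, hN₃⟩ := (Metric.tendsto_atTop.mp
    (tendsto_const_div_atTop_nhds_zero_nat (K * ((j:ℝ)+1)))) (ε/4) (by positivity)
  refine ⟨max (max N₂ N₃) 1, fun n hn => ?_⟩
  have hn1 : 1 ≤ n := le_trans (le_max_right _ _) hn
  have hnN₂ : N₂ ≤ n := le_trans (le_trans (le_max_left _ _) (le_max_left _ _)) hn
  have hnN₃ : N₃ ≤ n := le_trans (le_trans (le_max_right _ _) (le_max_left _ _)) hn
  have hnpos : (0:ℝ) < (n:ℝ) := by exact_mod_cast hn1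
  set h : ℕ := ⌈δ * (n:ℝ)⌉₊ with hhdef
  have hh1 : 1 ≤ h := by
    rw [hhdef]
    refine Nat.one_le_iff_ne_zero.mpr ?_
    simp only [ne_eq, Nat.ceil_eq_zero, not_le]
    positivity
  have hhpos : (0:ℝ) < (h:ℝ) := by exact_mod_cast hh1
  have hhge : δ * (n:ℝ) ≤ (h:ℝ) := Nat.le_ceil _
  have hhle : (h:ℝ) ≤ δ * (n:ℝ) + 1 := le_of_lt (Nat.ceil_lt_add_one (by positivity))
  have hpowpos : (0:ℝ) < (h:ℝ)^(j+1) := by positivity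
  have hkey := key_estimate a K hK hK0 j s n h hn1
  -- bound on F over the window
  have hFw : ∀ m ∈ Finset.Icc n (n + (j+1)*h),
      |cesSum (fun p => ∑ i ∈ Finset.Icc 1 p, a i) (j+1) m
        - s * cesSum (fun _ => (1:ℝ)) (j+1) m|
      ≤ ε₀ * ((n:ℝ) + ((j:ℝ)+1)*(h:ℝ))^(j+1) := by
    intro m hm
    have hm' := Finset.mem_Icc.mp hm
    have hm1 : 1 ≤ m := le_trans hn1 hm'.1
    have hmpos : (0:ℝ) < (m:ℝ) := by exact_mod_cast hm1
    have hmp : (0:ℝ) < (m:ℝ)^(j+1) := by positivity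
    have hclose := hN₂ m (le_trans hnN₂ hm'.1)
    rw [Real.dist_eq, sub_zero, abs_div,
      abs_of_nonneg (le_of_lt hmp), div_lt_iff₀ hmp] at hclose
    have h6 : (m:ℝ) ≤ (n:ℝ) + ((j:ℝ)+1)*(h:ℝ) := by
      calc (m:ℝ) ≤ ((n + (j+1)*h : ℕ) : ℝ) := by exact_mod_cast hm'.2
        _ = (n:ℝ) + ((j:ℝ)+1)*(h:ℝ) := by push_cast; ring
    have h7 : (m:ℝ)^(j+1) ≤ ((n:ℝ) + ((j:ℝ)+1)*(h:ℝ))^(j+1) :=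
      pow_le_pow_left₀ (le_of_lt hmpos) h6 _
    calc |cesSum (fun p => ∑ i ∈ Finset.Icc 1 p, a i) (j+1) m
        - s * cesSum (fun _ => (1:ℝ)) (j+1) m| ≤ ε₀ * (m:ℝ)^(j+1) := le_of_lt hclose
      _ ≤ ε₀ * ((n:ℝ) + ((j:ℝ)+1)*(h:ℝ))^(j+1) :=
          mul_le_mul_of_nonneg_left h7 (le_of_lt hε₀)
  have hDF := Dd_iter_abs_le h (j+1)
    (fun m => cesSum (fun p => ∑ i ∈ Finset.Icc 1 p, a i) (j+1) m
      - s * cesSum (fun _ => (1:ℝ)) (j+1) m) n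
    (ε₀ * ((n:ℝ) + ((j:ℝ)+1)*(h:ℝ))^(j+1)) hFw
  -- divide key estimate by h^(j+1)
  set DF : ℝ := (Dd h)^[j+1]
    (fun m => cesSum (fun p => ∑ i ∈ Finset.Icc 1 p, a i) (j+1) m
      - s * cesSum (fun _ => (1:ℝ)) (j+1) m) n with hDFdef
  have hdiv : |(∑ i ∈ Finset.Icc 1 n, a i) - s|
      ≤ K * ((j:ℝ)+1) * (h:ℝ) / (n:ℝ) + |DF| / (h:ℝ)^(j+1) := by
    calc |(∑ i ∈ Finset.Icc 1 n, a i) - s|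
        = (|(∑ i ∈ Finset.Icc 1 n, a i) - s| * (h:ℝ)^(j+1)) / (h:ℝ)^(j+1) := by
          field_simp
      _ ≤ ((K * ((j:ℝ)+1) * (h:ℝ) / (n:ℝ)) * (h:ℝ)^(j+1) + |DF|) / (h:ℝ)^(j+1) :=
          (div_le_div_iff_of_pos_right hpowpos).mpr hkey
      _ = K * ((j:ℝ)+1) * (h:ℝ) / (n:ℝ) + |DF| / (h:ℝ)^(j+1) := by
          rw [add_div, mul_div_cancel_right₀ _ (ne_of_gt hpowpos)]
  -- term 1 bound
  have t1 : K * ((j:ℝ)+1) * (h:ℝ) / (n:ℝ) ≤ ε/4 + ε/4 := by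
    have c0 : (0:ℝ) ≤ K * ((j:ℝ)+1) := by positivity
    have step1 : K * ((j:ℝ)+1) * (h:ℝ) / (n:ℝ)
        ≤ K * ((j:ℝ)+1) * (δ * (n:ℝ) + 1) / (n:ℝ) := by
      apply (div_le_div_iff_of_pos_right hnpos).mpr
      exact mul_le_mul_of_nonneg_left hhle c0
    have step2 : K * ((j:ℝ)+1) * (δ * (n:ℝ) + 1) / (n:ℝ)
        = K * ((j:ℝ)+1) * δ + K * ((j:ℝ)+1) / (n:ℝ) := by
      field_simp
    have t1a : K * ((j:ℝ)+1) * δ ≤ ε/4 := by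
      rw [hδdef, ← mul_div_assoc]
      rw [div_le_div_iff₀ (by positivity) (by norm_num : (0:ℝ) < 4)]
      nlinarith [hε.le, c0, mul_nonneg c0 hε.le]
    have t1b : K * ((j:ℝ)+1) / (n:ℝ) ≤ ε/4 := by
      have := hN₃ n hnN₃
      rw [Real.dist_eq, sub_zero] at this
      exact le_of_lt (lt_of_abs_lt this)
    calc K * ((j:ℝ)+1) * (h:ℝ) / (n:ℝ)
        ≤ K * ((j:ℝ)+1) * (δ * (n:ℝ) + 1) / (n:ℝ) := step1
      _ = K * ((j:ℝ)+1) * δ + K * ((j:ℝ)+1) / (n:ℝ) := step2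
      _ ≤ ε/4 + ε/4 := add_le_add t1a t1b
  -- term 2 bound
  have t2a : ((n:ℝ) + ((j:ℝ)+1)*(h:ℝ))^(j+1) / (h:ℝ)^(j+1)
      ≤ (1/δ + ((j:ℝ)+1))^(j+1) := by
    rw [← div_pow]
    apply pow_le_pow_left₀ (by positivity)
    rw [div_le_iff₀ hhpos]
    have hn_le : (n:ℝ) ≤ (h:ℝ)/δ := by
      rw [le_div_iff₀ hδ]
      calc (n:ℝ) * δ = δ * (n:ℝ) := by ring
        _ ≤ (h:ℝ) := hhge
    have exp : (1/δ + ((j:ℝ)+1)) * (h:ℝ) = (h:ℝ)/δ + ((j:ℝ)+1)*(h:ℝ) := by ring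
    linarith
  have t2 : |DF| / (h:ℝ)^(j+1) ≤ ε/4 := by
    calc |DF| / (h:ℝ)^(j+1)
        ≤ (2^(j+1) * (ε₀ * ((n:ℝ) + ((j:ℝ)+1)*(h:ℝ))^(j+1))) / (h:ℝ)^(j+1) :=
          (div_le_div_iff_of_pos_right hpowpos).mpr hDF
      _ = (2:ℝ)^(j+1) * ε₀ * (((n:ℝ) + ((j:ℝ)+1)*(h:ℝ))^(j+1) / (h:ℝ)^(j+1)) := by
          ring
      _ ≤ (2:ℝ)^(j+1) * ε₀ * (1/δ + ((j:ℝ)+1))^(j+1) :=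
          mul_le_mul_of_nonneg_left t2a (by positivity)
      _ = Cδ * ε₀ := by rw [hCdef]; ring
      _ = ε/4 := by
          rw [hε₀def]
          field_simp
  rw [Real.dist_eq]
  calc |(∑ i ∈ Finset.Icc 1 n, a i) - s|
      ≤ K * ((j:ℝ)+1) * (h:ℝ) / (n:ℝ) + |DF| / (h:ℝ)^(j+1) := hdiv
    _ ≤ (ε/4 + ε/4) + ε/4 := add_le_add t1 t2
    _ < ε := by linarith
end

section
/- Let a : ℕ → ℝ be a bounded sequence and B_n = (1/n) ∑_{i=0}^{n-1} a_i its Birkhoff averages. If the sequence (B_n) does not converge, then for every k ≥ 1 the k-th order Cesàro means of (B_n), namely S^{(k)}_n / n^k where S^{(0)}_n = B_n and S^{(k)}_n = ∑_{i=1}^n S^{(k-1)}_i, also do not converge. -/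
open Filter Topology

/-- Birkhoff averages: `birk a n = (1/n) * ∑_{i=0}^{n-1} a i` (junk value `0` at `n = 0`). -/
noncomputable def birk (a : ℕ → ℝ) (n : ℕ) : ℝ := (∑ i ∈ Finset.range n, a i) / n

open Finset in
lemma tauber (k : ℕ) (T : ℕ → ℝ) (C : ℝ) (hC : 0 ≤ C)
    (hT : ∀ i : ℕ, 1 ≤ i → |T (i+1) - T i| ≤ C * (i:ℝ) ^ k / i)
    (M : ℝ)
    (hU : Tendsto (fun n : ℕ => (∑ i ∈ Finset.Icc 1 n, T i) / (n:ℝ)^(k+1)) atTop (𝓝 M)) :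
    Tendsto (fun n : ℕ => T n / (n:ℝ)^k) atTop (𝓝 (((k:ℝ)+1) * M)) := by
  set L : ℝ := ((k:ℝ)+1) * M with hLdef
  rw [Metric.tendsto_atTop]
  intro δ hδ
  -- choose ε
  set F : ℝ → ℝ := fun ε => |M * (∑ j ∈ Finset.range (k+1), (1+ε)^j) - L| + C * ε * (1+ε)^k
    with hFdef
  have hF0 : F 0 = 0 := by
    simp [hFdef, hLdef]
    ring
  have hcont : ContinuousAt F 0 := by fun_prop
  have h1 : ∀ᶠ ε in 𝓝[>] (0:ℝ), F ε < δ/3 := by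
    have ht : Tendsto F (𝓝[>] (0:ℝ)) (𝓝 0) := by
      have := hcont.tendsto.mono_left (nhdsWithin_le_nhds (s := Set.Ioi (0:ℝ)))
      rwa [hF0] at this
    exact ht.eventually_lt_const (by linarith)
  obtain ⟨ε, hFε, hε⟩ := (h1.and eventually_mem_nhdsWithin).exists
  rw [Set.mem_Ioi] at hε
  -- window length
  set h : ℕ → ℕ := fun n => ⌈ε * n⌉₊ with hhdef
  have hh1 : ∀ n : ℕ, 1 ≤ n → 1 ≤ h n := by
    intro n hn
    exact Nat.ceil_pos.mpr (by positivity)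
  have hlow : ∀ n : ℕ, ε * n ≤ h n := fun n => Nat.le_ceil _
  have hup : ∀ n : ℕ, (h n : ℝ) ≤ ε * n + 1 := by
    intro n
    exact (Nat.ceil_lt_add_one (by positivity)).le
  -- ratio limit
  have hr : Tendsto (fun n : ℕ => (h n : ℝ) / n) atTop (𝓝 ε) := by
    have hub : Tendsto (fun n : ℕ => ε + 1 / (n:ℝ)) atTop (𝓝 (ε + 0)) :=
      tendsto_const_nhds.add tendsto_one_div_atTop_nhds_zero_nat
    rw [add_zero] at hub
    apply tendsto_of_tendsto_of_tendsto_of_le_of_le' tendsto_const_nhds hub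
    · filter_upwards [eventually_ge_atTop 1] with n hn
      have hn0 : (0:ℝ) < n := by exact_mod_cast hn
      rw [le_div_iff₀ hn0]
      linarith [hlow n]
    · filter_upwards [eventually_ge_atTop 1] with n hn
      have hn0 : (0:ℝ) < n := by exact_mod_cast hn
      rw [div_le_iff₀ hn0, add_mul, one_div, inv_mul_cancel₀ hn0.ne']
      linarith [hup n]
  have hinv : Tendsto (fun n : ℕ => (n : ℝ) / h n) atTop (𝓝 ε⁻¹) := by
    have := hr.inv₀ hε.ne'
    simpa [inv_div] using this
  have hratio : Tendsto (fun n : ℕ => ((n : ℝ) + h n) / n) atTop (𝓝 (1 + ε)) := by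
    have := tendsto_const_nhds.add hr (f := fun _ : ℕ => (1:ℝ))
    apply this.congr'
    filter_upwards [eventually_ge_atTop 1] with n hn
    have hn0 : (n:ℝ) ≠ 0 := by positivity
    field_simp
  -- the averaged sums
  set U : ℕ → ℝ := fun m => ∑ i ∈ Finset.Icc 1 m, T i with hUdef
  set s : ℕ → ℝ := fun m => U m / (m:ℝ)^(k+1) with hsdef
  have hUs : Tendsto s atTop (𝓝 M) := hU
  have hcomp : Tendsto (fun n : ℕ => s (n + h n)) atTop (𝓝 M) :=
    hUs.comp (tendsto_atTop_mono (fun n => Nat.le_add_right n (h n)) tendsto_id)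
  set mexpr : ℕ → ℝ := fun n =>
    s (n + h n) * (((n:ℝ) + h n) / n) ^ (k+1) * ((n:ℝ) / h n) - s n * ((n:ℝ) / h n)
    with hmdef
  set G : ℝ := M * (∑ j ∈ Finset.range (k+1), (1+ε)^j) with hGdef
  have hmlim : Tendsto mexpr atTop (𝓝 G) := by
    have hlim : Tendsto mexpr atTop
        (𝓝 (M * (1+ε)^(k+1) * ε⁻¹ - M * ε⁻¹)) :=
      ((hcomp.mul (hratio.pow (k+1))).mul hinv).sub (hUs.mul hinv)
    have hgeom : (∑ j ∈ Finset.range (k+1), (1+ε)^j) * ε = (1+ε)^(k+1) - 1 := by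
      have := geom_sum_mul (1+ε) (k+1)
      simpa using this
    have : M * (1+ε)^(k+1) * ε⁻¹ - M * ε⁻¹ = G := by
      have h2 : M * (1+ε)^(k+1) * ε⁻¹ - M * ε⁻¹ = M * ((1+ε)^(k+1) - 1) * ε⁻¹ := by ring
      rw [h2, ← hgeom, hGdef, mul_assoc, mul_assoc, mul_inv_cancel₀ hε.ne', mul_one]
    rwa [this] at hlim
  -- error bound function
  set E : ℕ → ℝ := fun n => C * ((h n : ℝ) / n) * (((n:ℝ) + h n) / n) ^ k with hEdef
  have hElim : Tendsto E atTop (𝓝 (C * ε * (1+ε)^k)) :=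
    (tendsto_const_nhds.mul hr).mul (hratio.pow k)
  -- core pointwise inequality
  have hcore : ∀ n : ℕ, 1 ≤ n → |T n / (n:ℝ)^k - mexpr n| ≤ E n := by
    intro n hn
    have hn0 : (0:ℝ) < n := by exact_mod_cast hn
    have hH1 : 1 ≤ h n := hh1 n hn
    have hH0 : (0:ℝ) < h n := by exact_mod_cast hH1
    have hNH : (0:ℝ) < (n:ℝ) + h n := by positivity
    -- identity
    have hid : mexpr n = (U (n + h n) - U n) / ((h n : ℝ) * (n:ℝ)^k) := by
      have hcast : ((n + h n : ℕ) : ℝ) = (n:ℝ) + h n := by push_cast; ring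
      simp only [hmdef, hsdef, hcast]
      rw [div_pow]
      field_simp
      ring
    -- window decomposition
    have hsplit : U (n + h n) - U n = ∑ i ∈ Finset.Ioc n (n + h n), T i := by
      have hU' : ∀ m : ℕ, U m = ∑ i ∈ Finset.Ioc 0 m, T i := by
        intro m
        rw [hUdef]
        congr 1
      rw [hU', hU']
      have := Finset.sum_Ioc_consecutive T (Nat.zero_le n) (Nat.le_add_right n (h n))
      linarith
    -- per-term bound
    have hterm : ∀ i ∈ Finset.Ioc n (n + h n),
        |T i - T n| ≤ (h n : ℝ) * (C * ((n:ℝ) + h n)^k / n) := by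
      intro i hi
      rw [Finset.mem_Ioc] at hi
      have htel : T i - T n = ∑ j ∈ Finset.Ico n i, (T (j+1) - T j) := by
        rw [Finset.sum_Ico_eq_sub _ hi.1.le, Finset.sum_range_sub, Finset.sum_range_sub]
        ring
      rw [htel]
      calc |∑ j ∈ Finset.Ico n i, (T (j+1) - T j)|
          ≤ ∑ j ∈ Finset.Ico n i, |T (j+1) - T j| := Finset.abs_sum_le_sum_abs _ _
        _ ≤ ∑ _j ∈ Finset.Ico n i, C * ((n:ℝ) + h n)^k / n := by
            apply Finset.sum_le_sum
            intro j hj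
            rw [Finset.mem_Ico] at hj
            have hj1 : 1 ≤ j := le_trans hn hj.1
            refine le_trans (hT j hj1) ?_
            have hjle : (j:ℝ) ≤ (n:ℝ) + h n := by
              have : j ≤ n + h n := by omega
              exact_mod_cast this
            refine div_le_div₀ (by positivity) ?_ hn0 (by exact_mod_cast hj.1)
            exact mul_le_mul_of_nonneg_left (pow_le_pow_left₀ (by positivity) hjle k) hC
        _ = ((i - n : ℕ) : ℝ) * (C * ((n:ℝ) + h n)^k / n) := by
            rw [Finset.sum_const, Nat.card_Ico, nsmul_eq_mul]
        _ ≤ (h n : ℝ) * (C * ((n:ℝ) + h n)^k / n) := by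
            apply mul_le_mul_of_nonneg_right _ (by positivity)
            have : i - n ≤ h n := by omega
            exact_mod_cast this
    -- window total
    have hwin : |(U (n + h n) - U n) - (h n : ℝ) * T n|
        ≤ (h n : ℝ) * ((h n : ℝ) * (C * ((n:ℝ) + h n)^k / n)) := by
      have hdecomp : (U (n + h n) - U n) - (h n : ℝ) * T n
          = ∑ i ∈ Finset.Ioc n (n + h n), (T i - T n) := by
        rw [hsplit, Finset.sum_sub_distrib, Finset.sum_const, Nat.card_Ioc, nsmul_eq_mul]
        simp
      rw [hdecomp]
      calc |∑ i ∈ Finset.Ioc n (n + h n), (T i - T n)|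
          ≤ ∑ i ∈ Finset.Ioc n (n + h n), |T i - T n| := Finset.abs_sum_le_sum_abs _ _
        _ ≤ ∑ _i ∈ Finset.Ioc n (n + h n), (h n : ℝ) * (C * ((n:ℝ) + h n)^k / n) :=
            Finset.sum_le_sum hterm
        _ = (h n : ℝ) * ((h n : ℝ) * (C * ((n:ℝ) + h n)^k / n)) := by
            rw [Finset.sum_const, Nat.card_Ioc, nsmul_eq_mul]
            simp
    -- conclude
    have heq : T n / (n:ℝ)^k - mexpr n
        = ((h n : ℝ) * T n - (U (n + h n) - U n)) / ((h n : ℝ) * (n:ℝ)^k) := by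
      rw [hid]
      field_simp
    rw [heq, abs_div,
      abs_of_pos (show (0:ℝ) < (h n : ℝ) * (n:ℝ)^k from by positivity),
      div_le_iff₀ (show (0:ℝ) < (h n : ℝ) * (n:ℝ)^k from by positivity)]
    calc |(h n : ℝ) * T n - (U (n + h n) - U n)|
        = |(U (n + h n) - U n) - (h n : ℝ) * T n| := abs_sub_comm _ _
      _ ≤ (h n : ℝ) * ((h n : ℝ) * (C * ((n:ℝ) + h n)^k / n)) := hwin
      _ = E n * ((h n : ℝ) * (n:ℝ)^k) := by
          rw [hEdef]
          simp only [div_pow]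
          field_simp
  -- final assembly
  obtain ⟨N1, hN1⟩ := Metric.tendsto_atTop.mp hmlim (δ/3) (by linarith)
  obtain ⟨N2, hN2⟩ := Metric.tendsto_atTop.mp hElim (δ/3) (by linarith)
  refine ⟨max 1 (max N1 N2), fun n hn => ?_⟩
  have hn1 : 1 ≤ n := le_trans (le_max_left _ _) hn
  have hd1 : |mexpr n - G| < δ/3 := by
    have := hN1 n (le_trans (le_trans (le_max_left _ _) (le_max_right _ _)) hn)
    rwa [Real.dist_eq] at this
  have hd2 : E n < C*ε*(1+ε)^k + δ/3 := by
    have h2 := hN2 n (le_trans (le_trans (le_max_right _ _) (le_max_right _ _)) hn)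
    rw [Real.dist_eq] at h2
    have := abs_lt.mp h2
    linarith [this.2]
  have hc := hcore n hn1
  have hFεval : |G - L| + C*ε*(1+ε)^k < δ/3 := by
    simp only [hFdef] at hFε
    rw [← hGdef] at hFε
    exact hFε
  have t1 : |T n / (n:ℝ)^k - L| ≤ |T n / (n:ℝ)^k - G| + |G - L| := abs_sub_le _ _ _
  have t2 : |T n / (n:ℝ)^k - G| ≤ |T n / (n:ℝ)^k - mexpr n| + |mexpr n - G| := abs_sub_le _ _ _
  rw [Real.dist_eq]
  linarith

lemma ces_bound (b : ℕ → ℝ) (C : ℝ) (hb : ∀ n, |b n| ≤ C) :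
    ∀ k n, 1 ≤ n → |cesSum b k n| ≤ C * (n:ℝ)^k := by
  have hC : 0 ≤ C := le_trans (abs_nonneg _) (hb 1)
  intro k
  induction k with
  | zero => intro n hn; simpa [cesSum] using hb n
  | succ k ih =>
    intro n hn
    calc |cesSum b (k+1) n| = |∑ i ∈ Finset.Icc 1 n, cesSum b k i| := by rw [cesSum]
      _ ≤ ∑ i ∈ Finset.Icc 1 n, |cesSum b k i| := Finset.abs_sum_le_sum_abs _ _
      _ ≤ ∑ i ∈ Finset.Icc 1 n, C * (n:ℝ)^k := by
          apply Finset.sum_le_sum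
          intro i hi
          rw [Finset.mem_Icc] at hi
          refine le_trans (ih i hi.1) ?_
          exact mul_le_mul_of_nonneg_left
            (pow_le_pow_left₀ (by positivity) (by exact_mod_cast hi.2) k) hC
      _ = (n:ℝ) * (C * (n:ℝ)^k) := by
          rw [Finset.sum_const, Nat.card_Icc, nsmul_eq_mul]
          simp
      _ = C * (n:ℝ)^(k+1) := by ring

lemma key (b : ℕ → ℝ) (C : ℝ) (hC : 0 ≤ C) (hb : ∀ n, |b n| ≤ C)
    (hsm : ∀ n : ℕ, 1 ≤ n → |b (n+1) - b n| ≤ C / n) :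
    ∀ k M, Tendsto (fun n : ℕ => cesSum b k n / (n:ℝ)^k) atTop (𝓝 M) →
      ∃ L, Tendsto b atTop (𝓝 L) := by
  intro k
  induction k with
  | zero => intro M hM; exact ⟨M, by simpa [cesSum] using hM⟩
  | succ k ih =>
    intro M hM
    have hT : ∀ i : ℕ, 1 ≤ i →
        |cesSum b k (i+1) - cesSum b k i| ≤ (C * 2^(k+1)) * (i:ℝ)^k / i := by
      intro i hi
      have hi0 : (0:ℝ) < i := by exact_mod_cast hi
      have hi1 : (1:ℝ) ≤ i := by exact_mod_cast hi
      match k with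
      | 0 =>
        simp only [cesSum]
        refine le_trans (hsm i hi) ?_
        rw [pow_zero, mul_one]
        gcongr
        norm_num
        linarith
      | k' + 1 =>
        have hstep : cesSum b (k'+1) (i+1) - cesSum b (k'+1) i = cesSum b k' (i+1) := by
          show (∑ j ∈ Finset.Icc 1 (i+1), cesSum b k' j)
            - (∑ j ∈ Finset.Icc 1 i, cesSum b k' j) = _
          rw [Finset.sum_Icc_succ_top (by omega)]
          ring
        rw [hstep]
        have hbd := ces_bound b C hb k' (i+1) (by omega)
        have hcast : ((i+1 : ℕ):ℝ) = (i:ℝ) + 1 := by push_cast; ring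
        rw [hcast] at hbd
        refine le_trans hbd ?_
        have h2 : ((i:ℝ)+1)^k' ≤ (2*(i:ℝ))^k' :=
          pow_le_pow_left₀ (by positivity) (by linarith) k'
        calc C * ((i:ℝ)+1)^k' ≤ C * (2*(i:ℝ))^k' := mul_le_mul_of_nonneg_left h2 hC
          _ = C * 2^k' * (i:ℝ)^k' := by rw [mul_pow]; ring
          _ ≤ C * 2^(k'+1+1) * (i:ℝ)^k' := by
              apply mul_le_mul_of_nonneg_right _ (by positivity)
              have h3 : (2:ℝ)^k' ≤ 2^(k'+1+1) :=
                pow_le_pow_right₀ (by norm_num) (by omega)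
              exact mul_le_mul_of_nonneg_left h3 hC
          _ = C * 2^(k'+1+1) * (i:ℝ)^(k'+1) / i := by
              rw [pow_succ]
              field_simp
              ring
    have hUten : Tendsto (fun n : ℕ =>
        (∑ i ∈ Finset.Icc 1 n, cesSum b k i) / (n:ℝ)^(k+1)) atTop (𝓝 M) := by
      apply hM.congr
      intro n
      rw [cesSum]
    have := tauber k (cesSum b k) (C * 2^(k+1)) (by positivity) hT M hUten
    exact ih _ this


/-- **Corollary 1.** If `a` is bounded and the Birkhoff averages
`B_n = (1/n) ∑_{i=0}^{n-1} a i` do not converge, then for every `k ≥ 1` the `k`-th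
order Cesàro means `S^{(k)}_n / n^k` of `(B_n)` (with `S^{(0)}_n = B_n`) do not
converge either. -/
theorem cesaro_means_of_divergent_birkhoff_diverge (a : ℕ → ℝ)
    (hbdd : ∃ C : ℝ, ∀ n, |a n| ≤ C)
    (hdiv : ¬ ∃ L : ℝ, Tendsto (birk a) atTop (𝓝 L))
    (k : ℕ) (hk : 1 ≤ k) :
    ¬ ∃ L : ℝ, Tendsto (fun n : ℕ => cesSum (birk a) k n / (n : ℝ) ^ k) atTop (𝓝 L) := by
  rintro ⟨L, hL⟩
  apply hdiv
  obtain ⟨C0, hC0⟩ := hbdd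
  have hC0' : 0 ≤ C0 := le_trans (abs_nonneg _) (hC0 0)
  have hsum : ∀ n : ℕ, |∑ i ∈ Finset.range n, a i| ≤ (n:ℝ) * C0 := by
    intro n
    calc |∑ i ∈ Finset.range n, a i| ≤ ∑ i ∈ Finset.range n, |a i| :=
          Finset.abs_sum_le_sum_abs _ _
      _ ≤ ∑ _i ∈ Finset.range n, C0 := Finset.sum_le_sum fun i _ => hC0 i
      _ = (n:ℝ) * C0 := by rw [Finset.sum_const, nsmul_eq_mul]; simp
  have hb : ∀ n, |birk a n| ≤ 2 * C0 := by
    intro n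
    rcases Nat.eq_zero_or_pos n with rfl | hn
    · simp [birk]
      linarith
    · have hn0 : (0:ℝ) < n := by exact_mod_cast hn
      rw [birk, abs_div, abs_of_pos hn0, div_le_iff₀ hn0]
      calc |∑ i ∈ Finset.range n, a i| ≤ (n:ℝ) * C0 := hsum n
        _ ≤ 2 * C0 * n := by nlinarith
  have hsm : ∀ n : ℕ, 1 ≤ n → |birk a (n+1) - birk a n| ≤ (2 * C0) / n := by
    intro n hn
    have hn0 : (0:ℝ) < n := by exact_mod_cast hn
    have hrec : birk a (n+1) - birk a n
        = ((n:ℝ) * a n - ∑ i ∈ Finset.range n, a i) / ((n:ℝ) * ((n:ℝ)+1)) := by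
      rw [birk, birk, Finset.sum_range_succ]
      push_cast
      field_simp
      ring
    rw [hrec, abs_div,
      abs_of_pos (show (0:ℝ) < (n:ℝ) * ((n:ℝ)+1) from by positivity),
      div_le_div_iff₀ (by positivity) hn0]
    have h1 : |(n:ℝ) * a n - ∑ i ∈ Finset.range n, a i|
        ≤ (n:ℝ) * C0 + (n:ℝ) * C0 := by
      refine le_trans (abs_sub _ _) ?_
      have h2 : |(n:ℝ) * a n| ≤ (n:ℝ) * C0 := by
        rw [abs_mul, abs_of_pos hn0]
        exact mul_le_mul_of_nonneg_left (hC0 n) hn0.le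
      linarith [hsum n]
    nlinarith [h1, hn0, hC0', abs_nonneg ((n:ℝ) * a n - ∑ i ∈ Finset.range n, a i)]
  exact key (birk a) (2 * C0) (by linarith) hb hsm k L hL
end

section
/- Let a : ℕ → ℝ be a bounded sequence and B_n = (1/n) ∑_{i=0}^{n-1} a_i its Birkhoff averages. Then the set of cluster points (limits of convergent subsequences) of the sequence (B_n) is exactly the closed interval [liminf_n B_n, limsup_n B_n]. -/
open Filter Topology

lemma birk_abs_le {a : ℕ → ℝ} {C : ℝ} (h : ∀ n, |a n| ≤ C) (n : ℕ) : |birk a n| ≤ C := by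
  have hC : 0 ≤ C := le_trans (abs_nonneg _) (h 0)
  rcases Nat.eq_zero_or_pos n with rfl | hn
  · simp [birk, hC]
  · have hsum : |∑ i ∈ Finset.range n, a i| ≤ n * C := by
      calc |∑ i ∈ Finset.range n, a i| ≤ ∑ i ∈ Finset.range n, |a i| :=
            Finset.abs_sum_le_sum_abs _ _
        _ ≤ ∑ _i ∈ Finset.range n, C := Finset.sum_le_sum fun i _ => h i
        _ = n * C := by simp [mul_comm]
    have hn' : (0:ℝ) < n := by exact_mod_cast hn
    rw [birk, abs_div, abs_of_pos hn', div_le_iff₀ hn']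
    calc |∑ i ∈ Finset.range n, a i| ≤ n * C := hsum
      _ = C * n := by ring

lemma birk_step_tendsto {a : ℕ → ℝ} {C : ℝ} (h : ∀ n, |a n| ≤ C) :
    Tendsto (fun n => birk a (n + 1) - birk a n) atTop (𝓝 0) := by
  have hC : 0 ≤ C := le_trans (abs_nonneg _) (h 0)
  have hbound : ∀ n : ℕ, ‖birk a (n + 1) - birk a n‖ ≤ 2 * C / (n + 1) := by
    intro n
    rcases Nat.eq_zero_or_pos n with rfl | hn
    · simp only [birk]
      simp only [Nat.cast_zero, Nat.cast_one, Finset.range_one, Finset.sum_singleton,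
        Finset.range_zero, Finset.sum_empty]
      norm_num
      calc |a 0| ≤ C := h 0
        _ ≤ 2 * C := by linarith
    · have hn' : (0:ℝ) < n := by exact_mod_cast hn
      have hn1 : (0:ℝ) < (n:ℝ) + 1 := by linarith
      have hsum : |∑ i ∈ Finset.range n, a i| ≤ n * C := by
        calc |∑ i ∈ Finset.range n, a i| ≤ ∑ i ∈ Finset.range n, |a i| :=
              Finset.abs_sum_le_sum_abs _ _
          _ ≤ ∑ _i ∈ Finset.range n, C := Finset.sum_le_sum fun i _ => h i
          _ = n * C := by simp [mul_comm]
      have hEq : birk a (n + 1) - birk a n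
          = ((n:ℝ) * a n - ∑ i ∈ Finset.range n, a i) / ((n:ℝ) * ((n:ℝ) + 1)) := by
        rw [birk, birk, Finset.sum_range_succ]
        push_cast
        field_simp
        ring
      rw [hEq]
      rw [Real.norm_eq_abs, abs_div, abs_of_pos (by positivity : (0:ℝ) < (n:ℝ) * ((n:ℝ)+1)),
        div_le_div_iff₀ (by positivity) hn1]
      have h1 : |(n:ℝ) * a n - ∑ i ∈ Finset.range n, a i| ≤ 2 * (n * C) := by
        calc |(n:ℝ) * a n - ∑ i ∈ Finset.range n, a i|
            ≤ |(n:ℝ) * a n| + |∑ i ∈ Finset.range n, a i| := abs_sub _ _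
          _ ≤ (n:ℝ) * C + n * C := by
              refine add_le_add ?_ hsum
              rw [abs_mul, abs_of_pos hn']
              exact mul_le_mul_of_nonneg_left (h n) (le_of_lt hn')
          _ = 2 * (n * C) := by ring
      calc |(n:ℝ) * a n - ∑ i ∈ Finset.range n, a i| * ((n:ℝ) + 1)
          ≤ 2 * (n * C) * ((n:ℝ) + 1) := by
            exact mul_le_mul_of_nonneg_right h1 (le_of_lt hn1)
        _ = 2 * C * ((n:ℝ) * ((n:ℝ) + 1)) := by ring
  have hlim : Tendsto (fun n : ℕ => 2 * C / ((n:ℝ) + 1)) atTop (𝓝 0) := by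
    have h := (tendsto_const_div_atTop_nhds_zero_nat (2 * C)).comp (tendsto_add_atTop_nat 1)
    have heq : (fun n : ℕ => 2 * C / ((n:ℝ) + 1))
        = (fun n : ℕ => 2 * C / (n:ℝ)) ∘ (fun n => n + 1) := by
      funext n
      simp only [Function.comp_apply, Nat.cast_add, Nat.cast_one]
    rw [heq]
    exact h
  exact squeeze_zero_norm hbound hlim

/-- Crossing lemma: if the steps of `B` tend to zero and `B` is frequently `≤ x` and
frequently `≥ x`, then `B` is frequently within `ε` of `x`. -/
lemma frequently_abs_sub_lt_of_cross {B : ℕ → ℝ} {x : ℝ}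
    (hstep : Tendsto (fun n => B (n + 1) - B n) atTop (𝓝 0))
    (hlo : ∃ᶠ n in atTop, B n ≤ x) (hhi : ∃ᶠ n in atTop, x ≤ B n)
    {ε : ℝ} (hε : 0 < ε) : ∃ᶠ n in atTop, |B n - x| < ε := by
  classical
  rw [frequently_atTop]
  intro N
  have hstep' : ∀ᶠ n in atTop, |B (n + 1) - B n| < ε := by
    have := hstep.eventually (Metric.ball_mem_nhds 0 hε)
    filter_upwards [this] with n hn
    simpa [Real.dist_eq] using hn
  obtain ⟨N₀, hN₀⟩ := eventually_atTop.1 hstep'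
  obtain ⟨n₁, hn₁ge, hn₁⟩ := frequently_atTop.1 hlo (max N N₀)
  by_cases hcase : x - ε < B n₁
  · refine ⟨n₁, le_trans (le_max_left _ _) hn₁ge, ?_⟩
    rw [abs_sub_lt_iff]
    constructor <;> linarith
  push_neg at hcase
  obtain ⟨n₂, hn₂ge, hn₂⟩ := frequently_atTop.1 hhi (n₁ + 1)
  have hex : ∃ m, n₁ < m ∧ x - ε < B m := ⟨n₂, hn₂ge, by linarith⟩
  have hmn₁ := (Nat.find_spec hex).1
  have hmB := (Nat.find_spec hex).2
  obtain ⟨k, hk⟩ : ∃ k, Nat.find hex = k + 1 := ⟨Nat.find hex - 1, by omega⟩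
  rw [hk] at hmn₁ hmB
  have hkn₁ : n₁ ≤ k := by omega
  have hBk : B k ≤ x - ε := by
    rcases eq_or_lt_of_le hkn₁ with rfl | hlt
    · exact hcase
    · have := Nat.find_min hex (by omega : k < Nat.find hex)
      push_neg at this
      exact this hlt
  have hkN₀ : N₀ ≤ k := le_trans (le_trans (le_max_right _ _) hn₁ge) hkn₁
  have hstepk : |B (k + 1) - B k| < ε := hN₀ k hkN₀
  refine ⟨k + 1, by
    have hNn₁ : N ≤ n₁ := le_trans (le_max_left _ _) hn₁ge
    omega, ?_⟩
  rw [abs_sub_lt_iff] at hstepk ⊢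
  constructor <;> linarith

/-- For a bounded sequence `a`, the set of cluster points (limits of convergent
subsequences) of the Birkhoff averages `B_n = (1/n) ∑_{i=0}^{n-1} a i` is exactly
the closed interval `[liminf B_n, limsup B_n]`. -/
theorem clusterSet_birkhoff_eq_Icc (a : ℕ → ℝ)
    (hbdd : ∃ C : ℝ, ∀ n, |a n| ≤ C) :
    {x : ℝ | ∃ φ : ℕ → ℕ, StrictMono φ ∧
        Tendsto (fun i => birk a (φ i)) atTop (𝓝 x)} =
      Set.Icc (liminf (birk a) atTop) (limsup (birk a) atTop) := by
  obtain ⟨C, hC⟩ := hbdd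
  have hB := birk_abs_le hC
  have hbd_above : IsBoundedUnder (· ≤ ·) atTop (birk a) :=
    isBoundedUnder_of ⟨C, fun n => (abs_le.1 (hB n)).2⟩
  have hbd_below : IsBoundedUnder (· ≥ ·) atTop (birk a) :=
    isBoundedUnder_of ⟨-C, fun n => (abs_le.1 (hB n)).1⟩
  have hcob_le : IsCoboundedUnder (· ≤ ·) atTop (birk a) :=
    hbd_below.isCoboundedUnder_flip
  have hcob_ge : IsCoboundedUnder (· ≥ ·) atTop (birk a) :=
    hbd_above.isCoboundedUnder_flip
  ext x
  simp only [Set.mem_setOf_eq, Set.mem_Icc]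
  constructor
  · rintro ⟨φ, hφ, hx⟩
    have hφtop : Tendsto φ atTop atTop := hφ.tendsto_atTop
    constructor
    · -- liminf ≤ x
      by_contra hlt
      push_neg at hlt
      obtain ⟨y, hxy, hyl⟩ := exists_between hlt
      have hev : ∀ᶠ n in atTop, y < birk a n :=
        eventually_lt_of_lt_liminf hyl hbd_below
      have hev' : ∀ᶠ i in atTop, y < birk a (φ i) := hφtop.eventually hev
      have : y ≤ x := ge_of_tendsto hx (hev'.mono fun i hi => hi.le)
      exact absurd this (not_le.2 hxy)
    · -- x ≤ limsup
      by_contra hlt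
      push_neg at hlt
      obtain ⟨y, hyl, hxy⟩ := exists_between hlt
      have hev : ∀ᶠ n in atTop, birk a n < y :=
        eventually_lt_of_limsup_lt hyl hbd_above
      have hev' : ∀ᶠ i in atTop, birk a (φ i) < y := hφtop.eventually hev
      have : x ≤ y := le_of_tendsto hx (hev'.mono fun i hi => hi.le)
      exact absurd this (not_le.2 hxy)
  · rintro ⟨hxl, hxu⟩
    have key : ∀ ε > 0, ∃ᶠ n in atTop, |birk a n - x| < ε := by
      intro ε hε
      rcases eq_or_lt_of_le hxu with rfl | hxu'
      · -- x = limsup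
        have h1 : ∃ᶠ n in atTop, limsup (birk a) atTop - ε < birk a n :=
          frequently_lt_of_lt_limsup hcob_le (by linarith)
        have h2 : ∀ᶠ n in atTop, birk a n < limsup (birk a) atTop + ε :=
          eventually_lt_of_limsup_lt (by linarith) hbd_above
        refine (h1.and_eventually h2).mono fun n hn => ?_
        rw [abs_sub_lt_iff]
        constructor <;> linarith [hn.1, hn.2]
      rcases eq_or_lt_of_le hxl with rfl | hxl'
      · -- x = liminf
        have h1 : ∃ᶠ n in atTop, birk a n < liminf (birk a) atTop + ε :=
          frequently_lt_of_liminf_lt hcob_ge (by linarith)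
        have h2 : ∀ᶠ n in atTop, liminf (birk a) atTop - ε < birk a n :=
          eventually_lt_of_lt_liminf (by linarith) hbd_below
        refine (h1.and_eventually h2).mono fun n hn => ?_
        rw [abs_sub_lt_iff]
        constructor <;> linarith [hn.1, hn.2]
      · -- liminf < x < limsup : crossing argument
        have hlo : ∃ᶠ n in atTop, birk a n ≤ x :=
          (frequently_lt_of_liminf_lt hcob_ge hxl').mono fun n hn => hn.le
        have hhi : ∃ᶠ n in atTop, x ≤ birk a n :=
          (frequently_lt_of_lt_limsup hcob_le hxu').mono fun n hn => hn.le
        exact frequently_abs_sub_lt_of_cross (birk_step_tendsto hC) hlo hhi hε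
    have hclust : MapClusterPt x atTop (birk a) := by
      rw [mapClusterPt_iff_frequently]
      intro s hs
      obtain ⟨ε, hε, hball⟩ := Metric.mem_nhds_iff.1 hs
      exact (key ε hε).mono fun n hn => hball (by simpa [Real.dist_eq] using hn)
    obtain ⟨ψ, hψ, hψt⟩ := TopologicalSpace.FirstCountableTopology.tendsto_subseq hclust
    exact ⟨ψ, hψ, hψt⟩
end

section
/- Let a : ℕ → ℝ be a bounded sequence whose Birkhoff averages B_n diverge, with α_{-1} = liminf a_n, β_{-1} = limsup a_n, α_0 = liminf B_n, β_0 = limsup B_n. Then for every ε > 0 small enough that α_0 + ε < β_0 − ε, there exists d > 1 such that the crossing times satisfy t_{j+1}(ε) / t_j(ε) ≥ d for all sufficiently large j; moreover one can take d = min{ (β_0 − α_{-1})/(α_0 − α_{-1} + 2ε), (β_{-1} − α_0)/(β_{-1} − β_0 + 2ε) }. -/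
open Filter Topology

/-- Crossing times of a sequence `B` between levels `α + ε` and `β - ε`, 0-indexed:
`crossTimes B α β ε 0` is the first `n ≥ 1` with `B n > β - ε`, and given `t_j`,
`t_{j+1}` is the least `n > t_j` with `B n < α + ε` (resp. `B n > β - ε`) for `j` even
(resp. odd).  (With 1-based indexing as in the paper: odd indices are above `β - ε`,
even indices below `α + ε`.) -/
noncomputable def crossTimes (B : ℕ → ℝ) (α β ε : ℝ) : ℕ → ℕ
  | 0 => sInf {n | 1 ≤ n ∧ β - ε < B n}
  | j+1 => sInf {n | crossTimes B α β ε j < n ∧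
      if j % 2 = 0 then B n < α + ε else β - ε < B n}

/-- **Proposition 1.**  Let `a` be bounded with divergent Birkhoff averages `B_n`,
and write `α₋₁ = liminf a`, `β₋₁ = limsup a`, `α₀ = liminf B`, `β₀ = limsup B`.
For every `ε > 0` small enough that `α₀ + ε < β₀ - ε`, the crossing times satisfy
`t_{j+1}(ε) / t_j(ε) ≥ d` for all sufficiently large `j`, where
`d = min{(β₀ - α₋₁)/(α₀ - α₋₁ + 2ε), (β₋₁ - α₀)/(β₋₁ - β₀ + 2ε)} > 1`. -/
theorem crossing_times_grow_exponentially (a : ℕ → ℝ)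
    (hbdd : ∃ C : ℝ, ∀ n, |a n| ≤ C)
    (hdiv : ¬ ∃ L : ℝ, Tendsto (birk a) atTop (𝓝 L))
    (ε : ℝ) (hε : 0 < ε)
    (hsmall : liminf (birk a) atTop + ε < limsup (birk a) atTop - ε) :
    1 < min ((limsup (birk a) atTop - liminf a atTop) /
          (liminf (birk a) atTop - liminf a atTop + 2 * ε))
        ((limsup a atTop - liminf (birk a) atTop) /
          (limsup a atTop - limsup (birk a) atTop + 2 * ε)) ∧
    ∀ᶠ j : ℕ in atTop,
      min ((limsup (birk a) atTop - liminf a atTop) /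
            (liminf (birk a) atTop - liminf a atTop + 2 * ε))
          ((limsup a atTop - liminf (birk a) atTop) /
            (limsup a atTop - limsup (birk a) atTop + 2 * ε)) ≤
        (crossTimes (birk a) (liminf (birk a) atTop) (limsup (birk a) atTop) ε (j + 1) : ℝ) /
          (crossTimes (birk a) (liminf (birk a) atTop) (limsup (birk a) atTop) ε j : ℝ) := by
  clear hdiv
  obtain ⟨C, hC⟩ := hbdd
  set B := birk a with hBdef
  set α1 := liminf a atTop with hα1
  set β1 := limsup a atTop with hβ1
  set α0 := liminf B atTop with hα0
  set β0 := limsup B atTop with hβ0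
  have hCpos : 0 ≤ C := le_trans (abs_nonneg _) (hC 0)
  -- B is bounded
  have hBabs : ∀ n, |B n| ≤ C := by
    intro n
    rcases Nat.eq_zero_or_pos n with h0 | h1
    · simp [hBdef, birk, h0, hCpos]
    · have hs : |∑ i ∈ Finset.range n, a i| ≤ (n : ℝ) * C := by
        calc |∑ i ∈ Finset.range n, a i| ≤ ∑ i ∈ Finset.range n, |a i| :=
              Finset.abs_sum_le_sum_abs _ _
          _ ≤ ∑ _i ∈ Finset.range n, C := Finset.sum_le_sum fun i _ => hC i
          _ = (n : ℝ) * C := by simp [mul_comm]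
      have hn : (0:ℝ) < n := by exact_mod_cast h1
      have hBn : |B n| = |∑ i ∈ Finset.range n, a i| / n := by
        rw [hBdef]; simp only [birk]
        rw [abs_div, abs_of_pos hn]
      rw [hBn, div_le_iff₀ hn]
      calc |∑ i ∈ Finset.range n, a i| ≤ (n:ℝ) * C := hs
        _ = C * n := mul_comm _ _
  have hab_le : IsBoundedUnder (· ≤ ·) atTop a :=
    isBoundedUnder_of ⟨C, fun n => (abs_le.mp (hC n)).2⟩
  have hab_ge : IsBoundedUnder (· ≥ ·) atTop a :=
    isBoundedUnder_of ⟨-C, fun n => (abs_le.mp (hC n)).1⟩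
  have hBb_le : IsBoundedUnder (· ≤ ·) atTop B :=
    isBoundedUnder_of ⟨C, fun n => (abs_le.mp (hBabs n)).2⟩
  have hBb_ge : IsBoundedUnder (· ≥ ·) atTop B :=
    isBoundedUnder_of ⟨-C, fun n => (abs_le.mp (hBabs n)).1⟩
  -- B is frequently above β0 - ε and frequently below α0 + ε
  have hfhi : ∃ᶠ n in atTop, β0 - ε < B n :=
    frequently_lt_of_lt_limsup hBb_ge.isCoboundedUnder_le (by rw [← hβ0]; linarith)
  have hflo : ∃ᶠ n in atTop, B n < α0 + ε :=
    frequently_lt_of_liminf_lt hBb_le.isCoboundedUnder_ge (by rw [← hα0]; linarith)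
  -- relating B and partial sums
  have hgt : ∀ n : ℕ, 1 ≤ n → β0 - ε < B n →
      (β0 - ε) * n < ∑ i ∈ Finset.range n, a i := by
    intro n hn h
    have hn' : (0:ℝ) < n := by exact_mod_cast hn
    rw [hBdef] at h; simp only [birk] at h
    rwa [lt_div_iff₀ hn'] at h
  have hlt : ∀ n : ℕ, 1 ≤ n → B n < α0 + ε →
      (∑ i ∈ Finset.range n, a i) < (α0 + ε) * n := by
    intro n hn h
    have hn' : (0:ℝ) < n := by exact_mod_cast hn
    rw [hBdef] at h; simp only [birk] at h
    rwa [div_lt_iff₀ hn'] at h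
  -- liminf a ≤ α0 + ε
  have hfa_lo : ∃ᶠ n in atTop, a n < α0 + ε := by
    rw [frequently_atTop]
    intro N
    obtain ⟨m, hm1, hBm⟩ := frequently_atTop.mp hfhi (N + 1)
    obtain ⟨m', hm'1, hBm'⟩ := frequently_atTop.mp hflo (m + 1)
    have hmpos : 1 ≤ m := le_trans (Nat.le_add_left 1 N) hm1
    have hmm' : m < m' := hm'1
    have hm'pos : 1 ≤ m' := le_trans hmpos hmm'.le
    have hSm := hgt m hmpos hBm
    have hSm' := hlt m' hm'pos hBm'
    have hcard : ((Finset.Ico m m').card : ℝ) = (m' : ℝ) - m := by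
      rw [Nat.card_Ico, Nat.cast_sub hmm'.le]
    have hmul : (α0 + ε) * (m:ℝ) ≤ (β0 - ε) * m := by
      apply mul_le_mul_of_nonneg_right (le_of_lt hsmall)
      positivity
    have hkey : ∑ i ∈ Finset.Ico m m', a i < ∑ _i ∈ Finset.Ico m m', (α0 + ε) := by
      calc ∑ i ∈ Finset.Ico m m', a i
          = (∑ i ∈ Finset.range m', a i) - ∑ i ∈ Finset.range m, a i :=
            Finset.sum_Ico_eq_sub _ hmm'.le
        _ < (α0 + ε) * m' - (α0 + ε) * m := by linarith
        _ = ∑ _i ∈ Finset.Ico m m', (α0 + ε) := by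
            rw [Finset.sum_const, nsmul_eq_mul, hcard]; ring
    obtain ⟨i, hi, hai⟩ := Finset.exists_lt_of_sum_lt hkey
    exact ⟨i, le_trans (le_trans (Nat.le_add_right N 1) hm1) (Finset.mem_Ico.mp hi).1, hai⟩
  have hα1le : α1 ≤ α0 + ε := by
    rw [hα1]
    exact liminf_le_of_frequently_le (hfa_lo.mono fun n h => le_of_lt h) hab_ge
  -- limsup a ≥ β0 - ε
  have hfa_hi : ∃ᶠ n in atTop, β0 - ε < a n := by
    rw [frequently_atTop]
    intro N
    obtain ⟨m, hm1, hBm⟩ := frequently_atTop.mp hflo (N + 1)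
    obtain ⟨m', hm'1, hBm'⟩ := frequently_atTop.mp hfhi (m + 1)
    have hmpos : 1 ≤ m := le_trans (Nat.le_add_left 1 N) hm1
    have hmm' : m < m' := hm'1
    have hm'pos : 1 ≤ m' := le_trans hmpos hmm'.le
    have hSm := hlt m hmpos hBm
    have hSm' := hgt m' hm'pos hBm'
    have hcard : ((Finset.Ico m m').card : ℝ) = (m' : ℝ) - m := by
      rw [Nat.card_Ico, Nat.cast_sub hmm'.le]
    have hmul : (α0 + ε) * (m:ℝ) ≤ (β0 - ε) * m := by
      apply mul_le_mul_of_nonneg_right (le_of_lt hsmall)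
      positivity
    have hkey : ∑ _i ∈ Finset.Ico m m', (β0 - ε) < ∑ i ∈ Finset.Ico m m', a i := by
      calc ∑ _i ∈ Finset.Ico m m', (β0 - ε)
          = (β0 - ε) * m' - (β0 - ε) * m := by
            rw [Finset.sum_const, nsmul_eq_mul, hcard]; ring
        _ < (∑ i ∈ Finset.range m', a i) - ∑ i ∈ Finset.range m, a i := by linarith
        _ = ∑ i ∈ Finset.Ico m m', a i := (Finset.sum_Ico_eq_sub _ hmm'.le).symm
    obtain ⟨i, hi, hai⟩ := Finset.exists_lt_of_sum_lt hkey
    exact ⟨i, le_trans (le_trans (Nat.le_add_right N 1) hm1) (Finset.mem_Ico.mp hi).1, hai⟩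
  have hβ1ge : β0 - ε ≤ β1 := by
    rw [hβ1]
    exact le_limsup_of_frequently_le (hfa_hi.mono fun n h => le_of_lt h) hab_le
  -- positivity of the denominators
  have hDα : (0:ℝ) < α0 - α1 + 2 * ε := by linarith
  have hDβ : (0:ℝ) < β1 - β0 + 2 * ε := by linarith
  have hd1 : 1 < (β0 - α1) / (α0 - α1 + 2 * ε) := by
    rw [lt_div_iff₀ hDα]; linarith
  have hd2 : 1 < (β1 - α0) / (β1 - β0 + 2 * ε) := by
    rw [lt_div_iff₀ hDβ]; linarith
  refine ⟨lt_min hd1 hd2, ?_⟩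
  -- properties of the crossing times
  set t := crossTimes B α0 β0 ε with htdef
  have ht0 : 1 ≤ t 0 ∧ β0 - ε < B (t 0) := by
    have hne : {n | 1 ≤ n ∧ β0 - ε < B n}.Nonempty := by
      obtain ⟨n, hn, h⟩ := frequently_atTop.mp hfhi 1
      exact ⟨n, hn, h⟩
    have := Nat.sInf_mem hne
    simpa [htdef, crossTimes] using this
  have htsucc : ∀ j, t j < t (j + 1) ∧
      (if j % 2 = 0 then B (t (j + 1)) < α0 + ε else β0 - ε < B (t (j + 1))) := by
    intro j
    have hne : {n | t j < n ∧ if j % 2 = 0 then B n < α0 + ε else β0 - ε < B n}.Nonempty := by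
      rcases Nat.even_or_odd j with hj | hj
      · obtain ⟨n, hn, h⟩ := frequently_atTop.mp hflo (t j + 1)
        exact ⟨n, hn, by simp [Nat.even_iff.mp hj, h]⟩
      · obtain ⟨n, hn, h⟩ := frequently_atTop.mp hfhi (t j + 1)
        exact ⟨n, hn, by simp [Nat.odd_iff.mp hj, h]⟩
    have := Nat.sInf_mem hne
    simpa [htdef, crossTimes] using this
  have htmono : ∀ j, t j < t (j + 1) := fun j => (htsucc j).1
  have ht1 : ∀ j, 1 ≤ t j := by
    intro j
    induction j with
    | zero => exact ht0.1
    | succ k ih => exact le_trans ih (htmono k).le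
  have htj : ∀ j, j < t j := by
    intro j
    induction j with
    | zero => exact ht0.1
    | succ k ih => have := htmono k; omega
  have hup : ∀ j, j % 2 = 0 → β0 - ε < B (t j) := by
    intro j hj
    match j with
    | 0 => exact ht0.2
    | (k+1) =>
      have hk : k % 2 = 1 := by omega
      simpa [hk] using (htsucc k).2
  have hdown : ∀ j, j % 2 = 1 → B (t j) < α0 + ε := by
    intro j hj
    match j with
    | 0 => simp at hj
    | (k+1) =>
      have hk : k % 2 = 0 := by omega
      simpa [hk] using (htsucc k).2
  -- eventual bounds on a
  have hev : ∀ᶠ n in atTop, α1 - ε < a n ∧ a n < β1 + ε := by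
    have h1 : ∀ᶠ n in atTop, α1 - ε < a n := by
      apply eventually_lt_of_lt_liminf _ hab_ge
      rw [← hα1]; linarith
    have h2 : ∀ᶠ n in atTop, a n < β1 + ε := by
      apply eventually_lt_of_limsup_lt _ hab_le
      rw [← hβ1]; linarith
    filter_upwards [h1, h2] with n hn1 hn2
    exact ⟨hn1, hn2⟩
  obtain ⟨N, hN⟩ := eventually_atTop.mp hev
  rw [eventually_atTop]
  refine ⟨N, fun j hj => ?_⟩
  have htjN : N ≤ t j := le_trans hj (htj j).le
  have hmm' : t j < t (j + 1) := htmono j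
  have hm1 : 1 ≤ t j := ht1 j
  have hmpos : (0:ℝ) < (t j : ℝ) := by exact_mod_cast hm1
  have hm'pos : (0:ℝ) < (t (j+1) : ℝ) := by
    have h : 0 < t (j+1) := by omega
    exact_mod_cast h
  have hcard : ((Finset.Ico (t j) (t (j+1))).card : ℝ) = (t (j+1) : ℝ) - t j := by
    rw [Nat.card_Ico, Nat.cast_sub hmm'.le]
  have hsum : (∑ i ∈ Finset.range (t (j+1)), a i) - (∑ i ∈ Finset.range (t j), a i)
      = ∑ i ∈ Finset.Ico (t j) (t (j+1)), a i :=
    (Finset.sum_Ico_eq_sub _ hmm'.le).symm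
  rcases Nat.even_or_odd j with hj2 | hj2
  · -- j even : B (t j) > β0 - ε, B (t (j+1)) < α0 + ε
    have hjm : j % 2 = 0 := Nat.even_iff.mp hj2
    have hBm : β0 - ε < B (t j) := hup j hjm
    have hBm' : B (t (j+1)) < α0 + ε := by
      have h := (htsucc j).2
      rwa [if_pos hjm] at h
    have hSm := hgt (t j) hm1 hBm
    have hSm' := hlt (t (j+1)) (le_trans hm1 hmm'.le) hBm'
    have hlow : ((t (j+1) : ℝ) - t j) * (α1 - ε) ≤ ∑ i ∈ Finset.Ico (t j) (t (j+1)), a i := by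
      have h : ∑ _i ∈ Finset.Ico (t j) (t (j+1)), (α1 - ε)
          ≤ ∑ i ∈ Finset.Ico (t j) (t (j+1)), a i :=
        Finset.sum_le_sum fun i hi =>
          (hN i (le_trans htjN (Finset.mem_Ico.mp hi).1)).1.le
      rwa [Finset.sum_const, nsmul_eq_mul, hcard] at h
    have hmain : (β0 - α1) * (t j : ℝ) ≤ (t (j+1) : ℝ) * (α0 - α1 + 2 * ε) := by
      nlinarith [hSm, hSm', hlow, hsum]
    have hfin : (β0 - α1) / (α0 - α1 + 2 * ε) ≤ (t (j+1) : ℝ) / (t j : ℝ) := by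
      rw [div_le_div_iff₀ hDα hmpos]; linarith
    exact le_trans (min_le_left _ _) hfin
  · -- j odd : B (t j) < α0 + ε, B (t (j+1)) > β0 - ε
    have hjm : j % 2 = 1 := Nat.odd_iff.mp hj2
    have hBm : B (t j) < α0 + ε := hdown j hjm
    have hBm' : β0 - ε < B (t (j+1)) := by
      have h := (htsucc j).2
      rwa [if_neg (by omega)] at h
    have hSm := hlt (t j) hm1 hBm
    have hSm' := hgt (t (j+1)) (le_trans hm1 hmm'.le) hBm'
    have hhigh : ∑ i ∈ Finset.Ico (t j) (t (j+1)), a i ≤ ((t (j+1) : ℝ) - t j) * (β1 + ε) := by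
      have h : ∑ i ∈ Finset.Ico (t j) (t (j+1)), a i
          ≤ ∑ _i ∈ Finset.Ico (t j) (t (j+1)), (β1 + ε) :=
        Finset.sum_le_sum fun i hi =>
          (hN i (le_trans htjN (Finset.mem_Ico.mp hi).1)).2.le
      rwa [Finset.sum_const, nsmul_eq_mul, hcard] at h
    have hmain : (β1 - α0) * (t j : ℝ) ≤ (t (j+1) : ℝ) * (β1 - β0 + 2 * ε) := by
      nlinarith [hSm, hSm', hhigh, hsum]
    have hfin : (β1 - α0) / (β1 - β0 + 2 * ε) ≤ (t (j+1) : ℝ) / (t j : ℝ) := by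
      rw [div_le_div_iff₀ hDβ hmpos]; linarith
    exact le_trans (min_le_right _ _) hfin
end

section
/- Let a : ℕ → ℝ be a bounded sequence whose Birkhoff averages B_n diverge, with α_{-1} = liminf a_n, β_{-1} = limsup a_n, α_0 = liminf B_n, β_0 = limsup B_n. If there exists 1 < D < ∞ such that limsup_{j→∞} t_{j+1}(ε) / t_j(ε) ≤ D for all sufficiently small ε > 0, then β_0 − α_0 ≤ ((D − 1)/(D + 1)) (β_{-1} − α_{-1}). -/
open Filter Topology

lemma birk_sum (a : ℕ → ℝ) (n : ℕ) : (∑ i ∈ Finset.range n, a i) = n * birk a n := by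
  rcases Nat.eq_zero_or_pos n with rfl | h
  · simp [birk]
  · have hn : ((n : ℝ)) ≠ 0 := by positivity
    unfold birk; rw [mul_div_assoc']; exact (mul_div_cancel_left₀ _ hn).symm

/-- lower sum bound between two times -/
lemma birk_lower {a : ℕ → ℝ} {p q : ℕ} (hpq : p ≤ q) {c : ℝ} (hc : ∀ i, p ≤ i → c ≤ a i) :
    (p : ℝ) * birk a p + ((q : ℝ) - p) * c ≤ (q : ℝ) * birk a q := by
  have hsplit := Finset.sum_range_add_sum_Ico a hpq
  have hsum : ∑ i ∈ Finset.Ico p q, c ≤ ∑ i ∈ Finset.Ico p q, a i :=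
    Finset.sum_le_sum fun i hi => hc i (Finset.mem_Ico.1 hi).1
  rw [Finset.sum_const, Nat.card_Ico, nsmul_eq_mul] at hsum
  rw [Nat.cast_sub hpq] at hsum
  linarith [hsplit, hsum, birk_sum a p, birk_sum a q]

/-- upper sum bound between two times -/
lemma birk_upper {a : ℕ → ℝ} {p q : ℕ} (hpq : p ≤ q) {c : ℝ} (hc : ∀ i, p ≤ i → a i ≤ c) :
    (q : ℝ) * birk a q ≤ (p : ℝ) * birk a p + ((q : ℝ) - p) * c := by
  have hsplit := Finset.sum_range_add_sum_Ico a hpq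
  have hsum : ∑ i ∈ Finset.Ico p q, a i ≤ ∑ i ∈ Finset.Ico p q, c :=
    Finset.sum_le_sum fun i hi => hc i (Finset.mem_Ico.1 hi).1
  rw [Finset.sum_const, Nat.card_Ico, nsmul_eq_mul] at hsum
  rw [Nat.cast_sub hpq] at hsum
  linarith [hsplit, hsum, birk_sum a p, birk_sum a q]

/-- Cesàro: limsup of Birkhoff averages is at most limsup of the sequence. -/
lemma limsup_birk_le {a : ℕ → ℝ} {C : ℝ} (h : ∀ n, |a n| ≤ C) :
    limsup (birk a) atTop ≤ limsup a atTop := by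
  have hbB_le : IsBoundedUnder (· ≤ ·) atTop (birk a) :=
    isBoundedUnder_of ⟨C, fun n => (abs_le.1 (birk_abs_le h n)).2⟩
  have hbB_ge : IsBoundedUnder (· ≥ ·) atTop (birk a) :=
    isBoundedUnder_of ⟨-C, fun n => (abs_le.1 (birk_abs_le h n)).1⟩
  have hba_le : IsBoundedUnder (· ≤ ·) atTop a :=
    isBoundedUnder_of ⟨C, fun n => (abs_le.1 (h n)).2⟩
  refine le_of_forall_pos_le_add fun ε hε => ?_
  set c := limsup a atTop + ε with hc
  have hev : ∀ᶠ n in atTop, a n < c :=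
    eventually_lt_of_limsup_lt (by simp [hc, hε]) hba_le
  obtain ⟨N, hN⟩ := eventually_atTop.1 hev
  set S := ∑ i ∈ Finset.range N, a i with hS
  have htend : Tendsto (fun n : ℕ => (S - N * c) / n + c) atTop (𝓝 c) := by
    have h0 : Tendsto (fun n : ℕ => (S - N * c) / n) atTop (𝓝 0) :=
      Tendsto.div_atTop tendsto_const_nhds tendsto_natCast_atTop_atTop
    simpa using h0.add (tendsto_const_nhds (x := c))
  have key : ∀ᶠ n in atTop, birk a n ≤ (S - N * c) / n + c := by
    filter_upwards [eventually_ge_atTop (max N 1)] with n hn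
    have hnN : N ≤ n := le_trans (le_max_left _ _) hn
    have hn1 : (0:ℝ) < n := by
      have : 1 ≤ n := le_trans (le_max_right _ _) hn
      exact_mod_cast this
    have hb := birk_upper hnN (c := c) (fun i hi => (hN i hi).le)
    have h2 : (n:ℝ) * birk a n ≤ S + ((n:ℝ) - N) * c := by
      have hSN := birk_sum a N
      rw [hS]; linarith [hb]
    calc birk a n ≤ (S + ((n:ℝ) - N) * c) / n := by
          rw [le_div_iff₀ hn1, mul_comm]; exact h2
      _ = (S - N * c) / n + c := by field_simp; ring
  calc limsup (birk a) atTop ≤ limsup (fun n : ℕ => (S - N * c) / n + c) atTop :=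
        limsup_le_limsup key hbB_ge.isCoboundedUnder_le htend.isBoundedUnder_le
    _ = c := htend.limsup_eq

/-- Cesàro: liminf of Birkhoff averages is at least liminf of the sequence. -/
lemma liminf_birk_ge {a : ℕ → ℝ} {C : ℝ} (h : ∀ n, |a n| ≤ C) :
    liminf a atTop ≤ liminf (birk a) atTop := by
  have hbB_le : IsBoundedUnder (· ≤ ·) atTop (birk a) :=
    isBoundedUnder_of ⟨C, fun n => (abs_le.1 (birk_abs_le h n)).2⟩
  have hbB_ge : IsBoundedUnder (· ≥ ·) atTop (birk a) :=
    isBoundedUnder_of ⟨-C, fun n => (abs_le.1 (birk_abs_le h n)).1⟩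
  have hba_ge : IsBoundedUnder (· ≥ ·) atTop a :=
    isBoundedUnder_of ⟨-C, fun n => (abs_le.1 (h n)).1⟩
  refine le_of_forall_pos_le_add fun ε hε => ?_
  set c := liminf a atTop - ε with hc
  have hev : ∀ᶠ n in atTop, c < a n :=
    eventually_lt_of_lt_liminf (by simp [hc, hε]) hba_ge
  obtain ⟨N, hN⟩ := eventually_atTop.1 hev
  set S := ∑ i ∈ Finset.range N, a i with hS
  have htend : Tendsto (fun n : ℕ => (S - N * c) / n + c) atTop (𝓝 c) := by
    have h0 : Tendsto (fun n : ℕ => (S - N * c) / n) atTop (𝓝 0) :=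
      Tendsto.div_atTop tendsto_const_nhds tendsto_natCast_atTop_atTop
    simpa using h0.add (tendsto_const_nhds (x := c))
  have key : ∀ᶠ n in atTop, (S - N * c) / n + c ≤ birk a n := by
    filter_upwards [eventually_ge_atTop (max N 1)] with n hn
    have hnN : N ≤ n := le_trans (le_max_left _ _) hn
    have hn1 : (0:ℝ) < n := by
      have : 1 ≤ n := le_trans (le_max_right _ _) hn
      exact_mod_cast this
    have hb := birk_lower hnN (c := c) (fun i hi => (hN i hi).le)
    have h2 : S + ((n:ℝ) - N) * c ≤ (n:ℝ) * birk a n := by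
      have hSN := birk_sum a N
      rw [hS]; linarith [hb]
    calc (S - N * c) / n + c = (S + ((n:ℝ) - N) * c) / n := by field_simp; ring
      _ ≤ birk a n := by rw [div_le_iff₀ hn1, mul_comm (birk a n)]; exact h2
  have hfin : c ≤ liminf (birk a) atTop := by
    calc c = liminf (fun n : ℕ => (S - N * c) / n + c) atTop := htend.liminf_eq.symm
      _ ≤ liminf (birk a) atTop :=
        liminf_le_liminf key htend.isBoundedUnder_ge hbB_le.isCoboundedUnder_ge
  simp only [hc] at hfin
  linarith

/-- **Proposition 2.**  Let `a` be bounded with divergent Birkhoff averages `B_n`,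
and write `α₋₁ = liminf a`, `β₋₁ = limsup a`, `α₀ = liminf B`, `β₀ = limsup B`.
If there is `1 < D < ∞` with `limsup_j t_{j+1}(ε)/t_j(ε) ≤ D` for all sufficiently
small `ε > 0`, then `β₀ - α₀ ≤ ((D - 1)/(D + 1)) (β₋₁ - α₋₁)`. -/
theorem contraction_of_bounded_crossing_ratios (a : ℕ → ℝ)
    (hbdd : ∃ C : ℝ, ∀ n, |a n| ≤ C)
    (hdiv : ¬ ∃ L : ℝ, Tendsto (birk a) atTop (𝓝 L))
    (D : ℝ) (hD : 1 < D)
    (hratio : ∃ ε₀ : ℝ, 0 < ε₀ ∧ ∀ ε : ℝ, 0 < ε → ε < ε₀ →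
      limsup (fun j : ℕ =>
        (((crossTimes (birk a) (liminf (birk a) atTop) (limsup (birk a) atTop) ε (j + 1) : ℝ) /
          (crossTimes (birk a) (liminf (birk a) atTop) (limsup (birk a) atTop) ε j : ℝ) : ℝ) : EReal))
        atTop ≤ (D : EReal)) :
    limsup (birk a) atTop - liminf (birk a) atTop ≤
      (D - 1) / (D + 1) * (limsup a atTop - liminf a atTop) := by
  obtain ⟨C, hC⟩ := hbdd
  obtain ⟨ε₀, hε₀, hrat⟩ := hratio
  set B := birk a with hBdef
  have hBle : IsBoundedUnder (· ≤ ·) atTop B :=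
    isBoundedUnder_of ⟨C, fun n => (abs_le.1 (birk_abs_le hC n)).2⟩
  have hBge : IsBoundedUnder (· ≥ ·) atTop B :=
    isBoundedUnder_of ⟨-C, fun n => (abs_le.1 (birk_abs_le hC n)).1⟩
  have hale : IsBoundedUnder (· ≤ ·) atTop a :=
    isBoundedUnder_of ⟨C, fun n => (abs_le.1 (hC n)).2⟩
  have hage : IsBoundedUnder (· ≥ ·) atTop a :=
    isBoundedUnder_of ⟨-C, fun n => (abs_le.1 (hC n)).1⟩
  set α := liminf B atTop with hαdef
  set β := limsup B atTop with hβdef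
  set αm := liminf a atTop with hαmdef
  set βm := limsup a atTop with hβmdef
  have hαβ : α < β := by
    rcases lt_or_ge α β with h | h
    · exact h
    · exfalso
      have heq : α = β := le_antisymm (liminf_le_limsup hBle hBge) h
      exact hdiv ⟨β, tendsto_of_liminf_eq_limsup heq rfl hBle hBge⟩
  have hαm : αm ≤ α := liminf_birk_ge hC
  have hβm : β ≤ βm := limsup_birk_le hC
  -- the key per-ε estimates
  have key : ∀ ε : ℝ, 0 < ε → ε < ε₀ →
      β - αm ≤ D * (α - αm + 2*ε) ∧ βm - α ≤ D * (βm - β + 2*ε) := by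
    intro ε hε hεε
    set t := crossTimes B α β ε with htdef
    have hfU : ∃ᶠ n in atTop, β - ε < B n :=
      frequently_lt_of_lt_limsup hBge.isCoboundedUnder_le (by linarith)
    have hfD : ∃ᶠ n in atTop, B n < α + ε :=
      frequently_lt_of_liminf_lt hBle.isCoboundedUnder_ge (by linarith)
    have h0ne : {n | 1 ≤ n ∧ β - ε < B n}.Nonempty := by
      obtain ⟨n, hn1, hn2⟩ := frequently_atTop.1 hfU 1
      exact ⟨n, hn1, hn2⟩
    have hmem0 : 1 ≤ t 0 ∧ β - ε < B (t 0) := by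
      have := Nat.sInf_mem h0ne
      simpa [htdef, crossTimes] using this
    have hstep : ∀ j, t j < t (j+1) ∧
        (if j % 2 = 0 then B (t (j+1)) < α + ε else β - ε < B (t (j+1))) := by
      intro j
      have hne : {n | t j < n ∧ if j % 2 = 0 then B n < α + ε else β - ε < B n}.Nonempty := by
        by_cases hj : j % 2 = 0
        · obtain ⟨n, hn1, hn2⟩ := frequently_atTop.1 hfD (t j + 1)
          exact ⟨n, hn1, by simpa [hj] using hn2⟩
        · obtain ⟨n, hn1, hn2⟩ := frequently_atTop.1 hfU (t j + 1)
          exact ⟨n, hn1, by simpa [hj] using hn2⟩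
      have hmem := Nat.sInf_mem hne
      have heq : t (j+1) = sInf {n | t j < n ∧
          if j % 2 = 0 then B n < α + ε else β - ε < B n} := by
        rw [htdef, crossTimes]
      rw [heq]
      exact hmem
    have hmono : StrictMono t := strictMono_nat_of_lt_succ fun j => (hstep j).1
    have ht1 : ∀ j, 1 ≤ t j := fun j => le_trans hmem0.1 (hmono.monotone (Nat.zero_le j))
    have hBup : ∀ j, j % 2 = 0 → β - ε < B (t j) := by
      intro j hj
      cases j with
      | zero => exact hmem0.2
      | succ k =>
        have hk : ¬ (k % 2 = 0) := by omega
        simpa [hk] using (hstep k).2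
    have hBdn : ∀ j, j % 2 = 1 → B (t j) < α + ε := by
      intro j hj
      cases j with
      | zero => omega
      | succ k =>
        have hk : k % 2 = 0 := by omega
        simpa [hk] using (hstep k).2
    have hevlow : ∀ᶠ n in atTop, αm - ε < a n :=
      eventually_lt_of_lt_liminf (by linarith) hage
    have hevhi : ∀ᶠ n in atTop, a n < βm + ε :=
      eventually_lt_of_limsup_lt (by linarith) hale
    obtain ⟨N, hNa⟩ := eventually_atTop.1 (hevlow.and hevhi)
    have hdpos1 : (0:ℝ) < α - αm + 2*ε := by linarith
    have hdpos2 : (0:ℝ) < βm - β + 2*ε := by linarith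
    constructor
    · -- downcrossings
      have hfreq1 : ∃ᶠ j : ℕ in atTop,
          (((β - αm)/(α - αm + 2*ε) : ℝ) : EReal) ≤ (((t (j+1) : ℝ) / (t j : ℝ) : ℝ) : EReal) := by
        rw [frequently_atTop]
        intro M
        refine ⟨2 * max M N, by omega, ?_⟩
        set j := 2 * max M N with hjdef
        have hj0 : j % 2 = 0 := by omega
        have hpq : t j < t (j+1) := (hstep j).1
        have hp1 : 1 ≤ t j := ht1 j
        have hpN : N ≤ t j := le_trans (by omega) hmono.le_apply
        have hppos : (0:ℝ) < t j := by exact_mod_cast hp1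
        have hqpos : (0:ℝ) < t (j+1) := by exact_mod_cast Nat.zero_lt_of_lt hpq
        have hBp : β - ε < B (t j) := hBup j hj0
        have hBq : B (t (j+1)) < α + ε := hBdn (j+1) (by omega)
        have hlow := birk_lower (a := a) hpq.le (c := αm - ε)
          (fun i hi => (hNa i (le_trans hpN hi)).1.le)
        have h1 : (t j : ℝ) * (β - ε) < (t j : ℝ) * B (t j) :=
          mul_lt_mul_of_pos_left hBp hppos
        have h2 : (t (j+1) : ℝ) * B (t (j+1)) < (t (j+1) : ℝ) * (α + ε) :=
          mul_lt_mul_of_pos_left hBq hqpos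
        rw [EReal.coe_le_coe_iff, div_le_div_iff₀ hdpos1 hppos]
        nlinarith [hlow, h1, h2]
      have hls := le_limsup_of_frequently_le hfreq1
      have hRD : (β - αm)/(α - αm + 2*ε) ≤ D :=
        EReal.coe_le_coe_iff.1 (le_trans hls (hrat ε hε hεε))
      rw [div_le_iff₀ hdpos1] at hRD
      linarith [hRD]
    · -- upcrossings
      have hfreq2 : ∃ᶠ j : ℕ in atTop,
          (((βm - α)/(βm - β + 2*ε) : ℝ) : EReal) ≤ (((t (j+1) : ℝ) / (t j : ℝ) : ℝ) : EReal) := by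
        rw [frequently_atTop]
        intro M
        refine ⟨2 * max M N + 1, by omega, ?_⟩
        set j := 2 * max M N + 1 with hjdef
        have hj1 : j % 2 = 1 := by omega
        have hpq : t j < t (j+1) := (hstep j).1
        have hp1 : 1 ≤ t j := ht1 j
        have hpN : N ≤ t j := le_trans (by omega) hmono.le_apply
        have hppos : (0:ℝ) < t j := by exact_mod_cast hp1
        have hqpos : (0:ℝ) < t (j+1) := by exact_mod_cast Nat.zero_lt_of_lt hpq
        have hBp : B (t j) < α + ε := hBdn j hj1
        have hBq : β - ε < B (t (j+1)) := hBup (j+1) (by omega)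
        have hup := birk_upper (a := a) hpq.le (c := βm + ε)
          (fun i hi => (hNa i (le_trans hpN hi)).2.le)
        have h1 : (t j : ℝ) * B (t j) < (t j : ℝ) * (α + ε) :=
          mul_lt_mul_of_pos_left hBp hppos
        have h2 : (t (j+1) : ℝ) * (β - ε) < (t (j+1) : ℝ) * B (t (j+1)) :=
          mul_lt_mul_of_pos_left hBq hqpos
        rw [EReal.coe_le_coe_iff, div_le_div_iff₀ hdpos2 hppos]
        nlinarith [hup, h1, h2]
      have hls := le_limsup_of_frequently_le hfreq2
      have hRD : (βm - α)/(βm - β + 2*ε) ≤ D :=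
        EReal.coe_le_coe_iff.1 (le_trans hls (hrat ε hε hεε))
      rw [div_le_iff₀ hdpos2] at hRD
      linarith [hRD]
  have hDpos : (0:ℝ) < D := by linarith
  have h1 : β - αm ≤ D * (α - αm) := by
    by_contra hcon
    push_neg at hcon
    set g := β - αm - D * (α - αm) with hg
    have hgpos : 0 < g := by simp [hg]; linarith
    set ε := min (ε₀/2) (g/(4*D)) with hε
    have hεpos : 0 < ε := lt_min (by linarith) (by positivity)
    have hεlt : ε < ε₀ := lt_of_le_of_lt (min_le_left _ _) (by linarith)
    have hk := (key ε hεpos hεlt).1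
    have hεg : ε ≤ g/(4*D) := min_le_right _ _
    rw [le_div_iff₀ (by positivity)] at hεg
    nlinarith [hk, hεg]
  have h2 : βm - α ≤ D * (βm - β) := by
    by_contra hcon
    push_neg at hcon
    set g := βm - α - D * (βm - β) with hg
    have hgpos : 0 < g := by simp [hg]; linarith
    set ε := min (ε₀/2) (g/(4*D)) with hε
    have hεpos : 0 < ε := lt_min (by linarith) (by positivity)
    have hεlt : ε < ε₀ := lt_of_le_of_lt (min_le_left _ _) (by linarith)
    have hk := (key ε hεpos hεlt).2
    have hεg : ε ≤ g/(4*D) := min_le_right _ _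
    rw [le_div_iff₀ (by positivity)] at hεg
    nlinarith [hk, hεg]
  rw [div_mul_eq_mul_div, le_div_iff₀ (by linarith : (0:ℝ) < D + 1)]
  nlinarith [h1, h2]
end
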